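/- arXiv:2303.00531 — 7 statements merged into one kernel-verified Lean document; each statement's English description precedes it below -/
import Mathlib

section
/- Let λ, μ, ν, s, t be real numbers with 0 < λ < μ, ν > 0, 0 < s < 1 and t > 0. Define G(s,t) = (μ−λ)^{ν/λ} · ( s(μe^{(λ−μ)t} − λ) − μ(e^{(λ−μ)t} − 1) )^i / ( μ − λe^{(λ−μ)t} + λs(e^{(λ−μ)t} − 1) )^{ν/λ + i} for a fixed natural number i (here the i-th power is an integer power and the real exponents are real powers of positive bases). Then G satisfies the first-order linear partial differential equation ∂G/∂t (s,t) = (μ − λs)(1 − s) ∂G/∂s (s,t) + ν(s − 1) G(s,t), and moreover G(s,0) = s^i for all s ∈ (0,1). -/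
open Real

/-- The candidate probability generating function of the linear birth and death
process with immigration (case `λ ≠ μ`), as a function of `s` and `t`. -/
noncomputable def G (lam mu nu : ℝ) (i : ℕ) (s t : ℝ) : ℝ :=
  (mu - lam) ^ (nu / lam) *
      (s * (mu * exp ((lam - mu) * t) - lam) - mu * (exp ((lam - mu) * t) - 1)) ^ i /
    (mu - lam * exp ((lam - mu) * t) + lam * s * (exp ((lam - mu) * t) - 1)) ^ (nu / lam + (i : ℝ))

/-- `G` solves the first-order linear PDE
`∂G/∂t = (μ - λ s)(1 - s) ∂G/∂s + ν (s - 1) G` with initial condition `G(s,0) = s^i`. -/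
theorem stmt_0 (lam mu nu s t : ℝ) (i : ℕ)
    (hlam : 0 < lam) (hlm : lam < mu) (hnu : 0 < nu)
    (hs : 0 < s) (hs1 : s < 1) (ht : 0 < t) :
    deriv (fun τ => G lam mu nu i s τ) t
        = (mu - lam * s) * (1 - s) * deriv (fun σ => G lam mu nu i σ t) s
          + nu * (s - 1) * G lam mu nu i s t
      ∧ ∀ σ ∈ Set.Ioo (0 : ℝ) 1, G lam mu nu i σ 0 = σ ^ i := by
  have hml : (0:ℝ) < mu - lam := by linarith
  constructor
  · -- the PDE
    set e : ℝ := exp ((lam - mu) * t) with hedef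
    have he : 0 < e := exp_pos _
    have he1 : e < 1 := by
      rw [hedef, exp_lt_one_iff]
      nlinarith
    -- the denominator and its positivity
    set D : ℝ := mu - lam * e + lam * s * (e - 1) with hDdef
    have hD : 0 < D := by
      have h2 : D = (mu - lam) + lam * (1 - e) * (1 - s) := by rw [hDdef]; ring
      nlinarith [mul_pos (mul_pos hlam (by linarith : (0:ℝ) < 1 - e)) (by linarith : (0:ℝ) < 1 - s)]
    have hDne : D ≠ 0 := ne_of_gt hD
    set c : ℝ := nu / lam + (i : ℝ) with hcdef
    have hX : 0 < D ^ c := rpow_pos_of_pos hD c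
    have hXne : D ^ c ≠ 0 := ne_of_gt hX
    have hsub : D ^ (c - 1) = D ^ c / D := by
      rw [Real.rpow_sub hD, Real.rpow_one]
    set C : ℝ := (mu - lam) ^ (nu / lam) with hCdef
    set N : ℝ := s * (mu * e - lam) - mu * (e - 1) with hNdef
    -- derivative in t
    have hexp : HasDerivAt (fun τ : ℝ => exp ((lam - mu) * τ)) (e * (lam - mu)) t := by
      simpa using (((hasDerivAt_id t).const_mul (lam - mu)).exp)
    have hNum : HasDerivAt
        (fun τ => s * (mu * exp ((lam - mu) * τ) - lam) - mu * (exp ((lam - mu) * τ) - 1))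
        (s * (mu * (e * (lam - mu))) - mu * (e * (lam - mu))) t :=
      (((hexp.const_mul mu).sub_const lam).const_mul s).sub ((hexp.sub_const 1).const_mul mu)
    have hDen : HasDerivAt
        (fun τ => mu - lam * exp ((lam - mu) * τ) + lam * s * (exp ((lam - mu) * τ) - 1))
        (-(lam * (e * (lam - mu))) + lam * s * (e * (lam - mu))) t :=
      ((hexp.const_mul lam).const_sub mu).add ((hexp.sub_const 1).const_mul (lam * s))
    have hGt : HasDerivAt (fun τ => G lam mu nu i s τ)
        ((C * ((i : ℝ) * N ^ (i - 1) * (s * (mu * (e * (lam - mu))) - mu * (e * (lam - mu)))) *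
            D ^ c -
          C * N ^ i *
            ((-(lam * (e * (lam - mu))) + lam * s * (e * (lam - mu))) * c * D ^ (c - 1))) /
          (D ^ c) ^ 2) t := by
      have h1 := (hNum.pow i).const_mul C
      have h2 := hDen.rpow_const (p := c) (Or.inl hDne)
      have := h1.div h2 hXne
      simpa only [G, hNdef, hDdef, hcdef, hCdef, hedef, Pi.div_def, Pi.pow_def] using this
    -- derivative in s
    have hNs : HasDerivAt (fun σ => σ * (mu * e - lam) - mu * (e - 1)) (mu * e - lam) s := by
      simpa using ((hasDerivAt_id s).mul_const (mu * e - lam)).sub_const (mu * (e - 1))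
    have hDs : HasDerivAt (fun σ => mu - lam * e + lam * σ * (e - 1)) (lam * (e - 1)) s := by
      simpa using (((hasDerivAt_id s).const_mul lam).mul_const (e - 1)).const_add (mu - lam * e)
    have hGs : HasDerivAt (fun σ => G lam mu nu i σ t)
        ((C * ((i : ℝ) * N ^ (i - 1) * (mu * e - lam)) * D ^ c -
          C * N ^ i * (lam * (e - 1) * c * D ^ (c - 1))) / (D ^ c) ^ 2) s := by
      have h1 := (hNs.pow i).const_mul C
      have h2 := hDs.rpow_const (p := c) (Or.inl hDne)
      have := h1.div h2 hXne
      simpa only [G, hNdef, hDdef, hcdef, hCdef, hedef, Pi.div_def, Pi.pow_def] using this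
    rw [hGt.deriv, hGs.deriv]
    have hGval : G lam mu nu i s t = C * N ^ i / D ^ c := by
      simp only [G, hNdef, hDdef, hcdef, hCdef, hedef]
    rw [hGval, hsub]
    have hlamne : lam ≠ 0 := ne_of_gt hlam
    have hNN : N = s * (mu * e - lam) - mu * (e - 1) := hNdef
    have hDD : D = mu - lam * e + lam * s * (e - 1) := hDdef
    have hcc : c = nu / lam + (i : ℝ) := hcdef
    rcases i with _ | j
    · simp only [Nat.cast_zero, pow_zero, zero_mul, Nat.cast_ofNat]
      generalize hY : D ^ c = Y at *
      rw [hcc, hDD]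
      have hD' : mu - lam * e + lam * s * (e - 1) ≠ 0 := hDne
      field_simp
      ring
    · have hpow : N ^ (j + 1) = N ^ j * N := pow_succ N j
      have hcast : ((j + 1 : ℕ) : ℝ) = (j : ℝ) + 1 := by push_cast; ring
      simp only [Nat.add_sub_cancel, hpow, hcast]
      generalize hY : D ^ c = Y at *
      rw [hcc, hDD, hNN]
      push_cast
      have hD' : mu - lam * e + lam * s * (e - 1) ≠ 0 := hDne
      generalize (s * (mu * e - lam) - mu * (e - 1)) ^ j = P
      generalize hZ : mu - lam * e + lam * s * (e - 1) = Z at hD' ⊢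
      field_simp
      rw [← hZ]
      ring
  · -- initial condition
    intro σ hσ
    have h0 : (lam - mu) * 0 = 0 := by ring
    simp only [G, h0, exp_zero]
    have h1 : mu - lam * 1 + lam * σ * (1 - 1) = mu - lam := by ring
    have h2 : σ * (mu * 1 - lam) - mu * (1 - 1) = σ * (mu - lam) := by ring
    rw [h1, h2, Real.rpow_add hml, Real.rpow_natCast, mul_pow]
    have hb : (mu - lam) ^ (nu / lam) ≠ 0 := ne_of_gt (rpow_pos_of_pos hml _)
    have hb2 : (mu - lam) ^ i ≠ 0 := pow_ne_zero _ (ne_of_gt hml)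
    field_simp
end

section
/- Let 0 < λ < μ, ν > 0 be real numbers, t ≥ 0, i a natural number, and s ∈ [0,1). Set q(t) = (μ−λ)/(μ − λe^{(λ−μ)t}) and r = ν/λ. Define for each natural number j: p_{i,j}(t) = q(t)^r · Σ_{l=0}^{min(i,j)} C(i,l) · binom(r+i+j−l−1, j−l) · (μ/λ)^{i−l} · (1−q(t))^{i+j−2l} · (1 − (μ/λ + 1)(1−q(t)))^l, where C(i,l) is the usual binomial coefficient and binom(x,k) = (∏_{m=0}^{k−1}(x−m))/k! is the generalized binomial coefficient for real x and natural k. Then the series Σ_{j=0}^{∞} p_{i,j}(t) s^j converges (in the sense of HasSum) with sum equal to G_i(s,t) := (μ−λ)^{ν/λ} · ( s(μe^{(λ−μ)t} − λ) − μ(e^{(λ−μ)t} − 1) )^i / ( μ − λe^{(λ−μ)t} + λs(e^{(λ−μ)t} − 1) )^{ν/λ + i}. -/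
open Real

/-- Generalized binomial coefficient `binom(x, k) = x(x-1)⋯(x-k+1)/k!` for real `x`. -/
noncomputable def genBinom (x : ℝ) (k : ℕ) : ℝ :=
  (∏ m ∈ Finset.range k, (x - m)) / (Nat.factorial k)

/-- `q(t) = (μ-λ)/(μ - λ e^{(λ-μ)t})`. -/
noncomputable def qfun (lam mu t : ℝ) : ℝ :=
  (mu - lam) / (mu - lam * exp ((lam - mu) * t))

/-- The claimed transition probabilities `p_{i,j}(t)` of the linear birth and death
process with immigration. -/
noncomputable def pTrans (lam mu nu : ℝ) (i j : ℕ) (t : ℝ) : ℝ :=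
  qfun lam mu t ^ (nu / lam) *
    ∑ l ∈ Finset.range (min i j + 1),
      (i.choose l : ℝ) * genBinom (nu / lam + (i : ℝ) + (j : ℝ) - (l : ℝ) - 1) (j - l) *
        (mu / lam) ^ (i - l) * (1 - qfun lam mu t) ^ (i + j - 2 * l) *
        (1 - (mu / lam + 1) * (1 - qfun lam mu t)) ^ l

set_option maxHeartbeats 1000000

open Finset Filter

/-- The (positive-exponent form of the) binomial series. -/
lemma hasSum_binomialSeries {rho z : ℝ} (hrho : 0 < rho) (hz0 : 0 ≤ z) (hz1 : z < 1) :
    HasSum (fun k : ℕ => (∏ m ∈ Finset.range k, (rho + m)) / (Nat.factorial k) * z ^ k)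
      ((1 - z) ^ (-rho)) := by
  set c : ℕ → ℝ := fun k => (∏ m ∈ Finset.range k, (rho + m)) / (Nat.factorial k) with hc
  have hcpos : ∀ k, 0 < c k := by
    intro k
    exact div_pos (Finset.prod_pos fun m _ => by positivity) (by positivity)
  have hcsucc : ∀ k : ℕ, c (k + 1) = c k * ((rho + k) / (k + 1)) := by
    intro k
    simp only [hc, Finset.prod_range_succ, Nat.factorial_succ]
    push_cast
    field_simp
  set w : ℝ := (1 + z) / 2 with hw
  have hw0 : 0 < w := by rw [hw]; linarith
  have hw1 : w < 1 := by rw [hw]; linarith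
  have hzw : z < w := by rw [hw]; linarith
  set u : ℕ → ℝ := fun k => c k * (k * w ^ (k - 1)) with hu
  have hu_sum : Summable u := by
    apply summable_of_ratio_norm_eventually_le (r := (1 + w) / 2) (by linarith)
    obtain ⟨N, hN⟩ := exists_nat_ge (rho * w / ((1 + w) / 2 - w))
    filter_upwards [Filter.eventually_ge_atTop (max N 1)] with k hk
    have hk1 : 1 ≤ k := le_trans (le_max_right N 1) hk
    have hkN : (N : ℝ) ≤ k := Nat.cast_le.mpr (le_trans (le_max_left N 1) hk)
    have hrw : (0:ℝ) < (1 + w) / 2 - w := by linarith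
    have hkey : (rho + k) * w ≤ (1 + w) / 2 * k := by
      have h1 : rho * w / ((1 + w) / 2 - w) ≤ k := le_trans hN hkN
      rw [div_le_iff₀ hrw] at h1
      nlinarith
    have hu1 : u (k + 1) = c k * ((rho + k) * w ^ k) := by
      simp only [hu, hcsucc]
      have : (k:ℝ) + 1 ≠ 0 := by positivity
      push_cast
      field_simp
    have hwk : w ^ k = w ^ (k - 1) * w := by
      conv_lhs => rw [show k = (k - 1) + 1 by omega]
      rw [pow_succ]
    have hupos : 0 ≤ u k := by
      have := hcpos k
      positivity
    have hu1pos : 0 ≤ u (k+1) := by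
      have := hcpos (k+1)
      positivity
    rw [Real.norm_of_nonneg hu1pos, Real.norm_of_nonneg hupos, hu1, hu, hwk]
    have hck := (hcpos k).le
    have hwp : (0:ℝ) ≤ w ^ (k-1) := by positivity
    calc c k * ((rho + k) * (w ^ (k-1) * w)) = (c k * w ^ (k-1)) * ((rho + k) * w) := by ring
      _ ≤ (c k * w ^ (k-1)) * ((1 + w)/2 * k) := by
          apply mul_le_mul_of_nonneg_left hkey (by positivity)
      _ = (1 + w)/2 * (c k * (k * w ^ (k-1))) := by ring
  have hg : ∀ (k : ℕ) (y : ℝ), y ∈ Set.Ioo (-w) w →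
      HasDerivAt (fun y : ℝ => c k * y ^ k) (c k * (k * y ^ (k - 1))) y :=
    fun k y _ => (hasDerivAt_pow k y).const_mul _
  have hg' : ∀ (k : ℕ) (y : ℝ), y ∈ Set.Ioo (-w) w → ‖c k * (k * y ^ (k - 1))‖ ≤ u k := by
    intro k y hy
    have hya : |y| ≤ w := le_of_lt (abs_lt.mpr ⟨hy.1, hy.2⟩)
    have : ‖c k * (k * y ^ (k-1))‖ = c k * (k * |y| ^ (k-1)) := by
      rw [norm_mul, norm_mul, norm_pow, Real.norm_of_nonneg (hcpos k).le,
        Real.norm_natCast, Real.norm_eq_abs]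
    rw [this, hu]
    exact mul_le_mul_of_nonneg_left (mul_le_mul_of_nonneg_left
      (pow_le_pow_left₀ (abs_nonneg y) hya _) (Nat.cast_nonneg k)) (hcpos k).le
  have h0mem : (0:ℝ) ∈ Set.Ioo (-w) w := ⟨by linarith, hw0⟩
  have hsum0 : Summable fun k => c k * (0:ℝ) ^ k := by
    apply summable_of_ne_finset_zero (s := {0})
    intro k hk
    simp only [Finset.mem_singleton] at hk
    simp [zero_pow hk]
  have hzmem : z ∈ Set.Ioo (-w) w := ⟨by linarith, hzw⟩
  have key : ∀ y ∈ Set.Ioo (-w) w,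
      HasDerivAt (fun x => ∑' k, c k * x ^ k) (∑' k, c k * (k * y ^ (k - 1))) y :=
    fun y hy => hasDerivAt_tsum_of_isPreconnected hu_sum isOpen_Ioo
      (convex_Ioo _ _).isPreconnected hg hg' h0mem hsum0 hy
  have hsummable : ∀ y ∈ Set.Ioo (-w) w, Summable fun k => c k * y ^ k :=
    fun y hy => summable_of_summable_hasDerivAt_of_isPreconnected hu_sum isOpen_Ioo
      (convex_Ioo _ _).isPreconnected hg hg' h0mem hsum0 hy
  set S : ℝ → ℝ := fun x => ∑' k, c k * x ^ k with hSdef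
  have hODE : ∀ y ∈ Set.Ioo (-w) w,
      (1 - y) * (∑' k, c k * (k * y ^ (k - 1))) = rho * S y := by
    intro y hy
    have hDsum : Summable fun k => c k * (k * y ^ (k - 1)) :=
      Summable.of_norm_bounded hu_sum (fun k => hg' k y hy)
    have h1 : HasSum (fun k => c k * (k * y ^ (k - 1))) (∑' k, c k * (k * y ^ (k - 1))) :=
      hDsum.hasSum
    have h2 : HasSum (fun k : ℕ => c (k + 1) * ((k + 1 : ℕ) * y ^ k))
        (∑' k, c k * (k * y ^ (k - 1))) := by
      have h3 := (hasSum_nat_add_iff' 1).mpr h1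
      simpa using h3
    have heq : (fun k : ℕ => c (k + 1) * ((k + 1 : ℕ) * y ^ k)) =
        fun k : ℕ => rho * (c k * y ^ k) + y * (c k * (k * y ^ (k - 1))) := by
      funext k
      rw [hcsucc]
      have hk1 : (k:ℝ) + 1 ≠ 0 := by positivity
      rcases Nat.eq_zero_or_pos k with hk | hk
      · subst hk; simp; ring
      · have : y ^ k = y * y ^ (k - 1) := by
          conv_lhs => rw [show k = (k - 1) + 1 by omega]
          rw [pow_succ]; ring
        rw [this]
        push_cast
        field_simp
    rw [heq] at h2
    have h4 := (((hsummable y hy).hasSum).mul_left rho).add (h1.mul_left y)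
    have h5 := h2.unique h4
    rw [hSdef]
    linarith [h5]
  have hF : ∀ y ∈ Set.Ioo (-w) w, HasDerivAt (fun x => S x * (1 - x) ^ rho) 0 y := by
    intro y hy
    have h1y : 0 < 1 - y := by linarith [hy.2]
    have hi : HasDerivAt (fun x : ℝ => 1 - x) (-1) y := by
      simpa using (hasDerivAt_id y).const_sub 1
    have hr : HasDerivAt (fun x : ℝ => (1 - x) ^ rho) (rho * (1 - y) ^ (rho - 1) * (-1)) y :=
      (Real.hasDerivAt_rpow_const (Or.inl (ne_of_gt h1y))).comp y hi
    have hmul := (key y hy).mul hr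
    have hODEy := hODE y hy
    have hpow : (1 - y) ^ rho = (1 - y) ^ (rho - 1) * (1 - y) := by
      have h := Real.rpow_add h1y (rho - 1) 1
      rw [Real.rpow_one, show rho - 1 + 1 = rho from by ring] at h
      exact h
    refine hmul.congr_deriv ?_
    rw [hpow]
    rw [hSdef]
    linear_combination ((1 - y) ^ (rho - 1)) * hODEy
  have hsub : Set.Icc (0:ℝ) z ⊆ Set.Ioo (-w) w :=
    fun y hy => ⟨by linarith [hy.1], by linarith [hy.2]⟩
  have hcont : ContinuousOn (fun x => S x * (1 - x) ^ rho) (Set.Icc 0 z) :=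
    fun y hy => ((hF y (hsub hy)).continuousAt).continuousWithinAt
  have hconst := constant_of_has_deriv_right_zero hcont
    (fun y hy => (hF y (hsub ⟨hy.1, le_of_lt hy.2⟩)).hasDerivWithinAt)
    z (Set.right_mem_Icc.mpr hz0)
  have hS0 : S 0 = 1 := by
    have h1 : HasSum (fun k => c k * (0:ℝ) ^ k) (c 0 * (0:ℝ) ^ 0) :=
      hasSum_single 0 (fun k hk => by simp [zero_pow hk])
    have h3 : S 0 = ∑' k, c k * (0:ℝ) ^ k := rfl
    rw [h3, h1.tsum_eq]
    simp [hc]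
  rw [hS0, sub_zero, Real.one_rpow, mul_one] at hconst
  have h1z : 0 < 1 - z := by linarith
  have hSz : S z = (1 - z) ^ (-rho) := by
    rw [Real.rpow_neg h1z.le]
    exact eq_inv_of_mul_eq_one_left hconst
  have hfin := (hsummable z hzmem).hasSum
  have heq2 : (∑' (b : ℕ), c b * z ^ b) = (1 - z) ^ (-rho) := hSz
  rw [heq2] at hfin
  exact hfin


lemma genBinom_shift (rho : ℝ) (k : ℕ) :
    genBinom (rho + k - 1) k = (∏ m ∈ Finset.range k, (rho + m)) / (Nat.factorial k) := by
  unfold genBinom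
  congr 1
  rw [← Finset.prod_range_reflect (fun j => rho + (j : ℝ)) k]
  apply Finset.prod_congr rfl
  intro j hj
  rw [Finset.mem_range] at hj
  have h1 : k - 1 - j = k - (j + 1) := by omega
  rw [h1, Nat.cast_sub (by omega)]
  push_cast
  ring

/-- The series `Σ_j p_{i,j}(t) s^j` converges with sum `G_i(s,t)`. -/
theorem stmt_2 (lam mu nu t : ℝ) (i : ℕ) (s : ℝ)
    (hlam : 0 < lam) (hlm : lam < mu) (hnu : 0 < nu) (ht : 0 ≤ t)
    (hs0 : 0 ≤ s) (hs1 : s < 1) :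
    HasSum (fun j : ℕ => pTrans lam mu nu i j t * s ^ j) (G lam mu nu i s t) := by
  set E := exp ((lam - mu) * t) with hE
  have hEpos : 0 < E := exp_pos _
  have hE1 : E ≤ 1 := by
    rw [hE, Real.exp_le_one_iff]
    exact mul_nonpos_of_nonpos_of_nonneg (by linarith) ht
  have hD : 0 < mu - lam * E := by nlinarith
  set r := nu / lam with hr
  have hrpos : 0 < r := div_pos hnu hlam
  have hqE : qfun lam mu t = (mu - lam) / (mu - lam * E) := rfl
  set q := qfun lam mu t with hq
  have hq0 : 0 < q := by rw [hqE]; exact div_pos (by linarith) hD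
  have hq1 : q ≤ 1 := by rw [hqE, div_le_one hD]; nlinarith
  set x := 1 - q with hx
  have hx0 : 0 ≤ x := by rw [hx]; linarith
  have hx1 : x < 1 := by rw [hx]; linarith
  set a := mu / lam with ha
  set cc := 1 - (a + 1) * x with hcc
  set z := x * s with hz
  have hz0 : 0 ≤ z := mul_nonneg hx0 hs0
  have hz1 : z < 1 := lt_of_le_of_lt (mul_le_of_le_one_right hx0 hs1.le) hx1
  have hrho : (0:ℝ) < r + i := by positivity
  -- the summand functions
  set f : ℕ → ℕ → ℝ := fun l j => if l ≤ j then
      (i.choose l : ℝ) * genBinom (r + (i : ℝ) + (j : ℝ) - (l : ℝ) - 1) (j - l) *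
        a ^ (i - l) * x ^ (i + j - 2 * l) * cc ^ l * s ^ j
    else 0 with hf
  -- each f l has an explicit sum
  have hBl : ∀ l ∈ Finset.range (i + 1), HasSum (f l)
      ((i.choose l : ℝ) * (cc * s) ^ l * (a * x) ^ (i - l) * (1 - z) ^ (-(r + (i:ℝ)))) := by
    intro l hl
    rw [Finset.mem_range] at hl
    have hl' : l ≤ i := by omega
    have base := (hasSum_binomialSeries hrho hz0 hz1).mul_left
      ((i.choose l : ℝ) * (cc * s) ^ l * (a * x) ^ (i - l))
    have hptwise : (fun k : ℕ => ((i.choose l : ℝ) * (cc * s) ^ l * (a * x) ^ (i - l)) *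
        ((∏ m ∈ Finset.range k, (r + (i:ℝ) + m)) / (Nat.factorial k) * z ^ k)) =
        fun k : ℕ => f l (k + l) := by
      funext k
      rw [hf]
      simp only [if_pos (by omega : l ≤ k + l)]
      have e1 : r + ((i:ℝ)) + ((k + l : ℕ) : ℝ) - (l : ℝ) - 1 = (r + (i:ℝ) + (k:ℝ)) - 1 := by
        push_cast; ring
      have e3 : (k + l) - l = k := by omega
      have e4 : genBinom (r + (i:ℝ) + ((k + l : ℕ) : ℝ) - (l:ℝ) - 1) ((k + l) - l) =
          (∏ m ∈ Finset.range k, (r + (i:ℝ) + m)) / (Nat.factorial k) := by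
        rw [e1, e3, ← genBinom_shift (r + (i:ℝ)) k]
      rw [e4]
      have e5 : i + (k + l) - 2 * l = (i - l) + k := by omega
      rw [e5, pow_add, pow_add, mul_pow, mul_pow]
      rw [hz, mul_pow]
      ring
    rw [hptwise] at base
    have := (hasSum_nat_add_iff l).mp base
    have hzero : ∑ j ∈ Finset.range l, f l j = 0 := by
      apply Finset.sum_eq_zero
      intro j hj
      rw [Finset.mem_range] at hj
      rw [hf]
      simp only [if_neg (by omega : ¬ l ≤ j)]
    rwa [hzero, add_zero] at this
  -- sum over l
  have hTotal := hasSum_sum hBl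
  have hTotal2 := hTotal.mul_left (q ^ r)
  -- identify the function with `pTrans * s^j`
  have hfun : (fun j : ℕ => q ^ r * ∑ l ∈ Finset.range (i + 1), f l j) =
      fun j : ℕ => pTrans lam mu nu i j t * s ^ j := by
    funext j
    rw [pTrans]
    rw [← hq, ← hr, ← ha, ← hx, ← hcc]
    rw [mul_assoc, Finset.sum_mul]
    congr 1
    have hfilter : Finset.range (min i j + 1) =
        Finset.filter (fun l => l ≤ j) (Finset.range (i + 1)) := by
      ext l
      simp only [Finset.mem_range, Finset.mem_filter]
      omega
    rw [hfilter, Finset.sum_filter]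
  rw [hfun] at hTotal2
  -- identify the value with G
  have hval : q ^ r * ∑ l ∈ Finset.range (i + 1),
      (i.choose l : ℝ) * (cc * s) ^ l * (a * x) ^ (i - l) * (1 - z) ^ (-(r + (i:ℝ))) =
      G lam mu nu i s t := by
    have hsum_pow : ∑ l ∈ Finset.range (i + 1),
        (i.choose l : ℝ) * (cc * s) ^ l * (a * x) ^ (i - l) * (1 - z) ^ (-(r + (i:ℝ))) =
        (cc * s + a * x) ^ i * (1 - z) ^ (-(r + (i:ℝ))) := by
      rw [add_pow, Finset.sum_mul]
      apply Finset.sum_congr rfl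
      intro l _
      ring
    rw [hsum_pow]
    -- now pure algebra with rpow
    set N := s * (mu * E - lam) - mu * (E - 1) with hN
    set B := mu - lam * E + lam * s * (E - 1) with hB
    set D := mu - lam * E with hDD
    have hDne : D ≠ 0 := ne_of_gt hD
    have hlamne : lam ≠ 0 := ne_of_gt hlam
    have key1 : cc * s + a * x = N / D := by
      rw [hcc, ha, hx, hqE, hN, hDD]
      field_simp [show mu - lam * E ≠ 0 from hDne]
      ring
    have key2 : 1 - z = B / D := by
      rw [hz, hx, hqE, hB, hDD]
      field_simp [show mu - lam * E ≠ 0 from hDne]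
      ring
    have hBpos : 0 < B := by
      have h1 : 0 < B / D := by rw [← key2]; linarith
      have := mul_pos h1 hD
      rwa [div_mul_cancel₀ _ hDne] at this
    have hqpow : q ^ r = (mu - lam) ^ r / D ^ r := by
      rw [hqE]
      exact Real.div_rpow (by linarith) hD.le r
    have hzpow : (1 - z) ^ (-(r + (i:ℝ))) = D ^ (r + (i:ℝ)) / B ^ (r + (i:ℝ)) := by
      rw [key2, Real.rpow_neg (by positivity), Real.div_rpow hBpos.le hD.le]
      rw [inv_div]
    rw [key1, hqpow, hzpow, div_pow]
    rw [G, ← hE, ← hr, ← hN, ← hB]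
    have hDsplit : D ^ (r + (i:ℝ)) = D ^ r * D ^ i := by
      rw [Real.rpow_add hD, Real.rpow_natCast]
    rw [hDsplit]
    have hDrne : D ^ r ≠ 0 := ne_of_gt (Real.rpow_pos_of_pos hD r)
    have hDine : D ^ i ≠ 0 := pow_ne_zero i hDne
    have hBne : B ^ (r + (i:ℝ)) ≠ 0 := ne_of_gt (Real.rpow_pos_of_pos hBpos _)
    field_simp
  rwa [hval] at hTotal2
end

section
/- Let 0 < λ < μ, ν > 0 be real numbers. Set q(t) = (μ−λ)/(μ − λe^{(λ−μ)t}) and r = ν/λ, and for natural numbers i, j define p_{i,j}(t) = q(t)^r · Σ_{l=0}^{min(i,j)} C(i,l) · binom(r+i+j−l−1, j−l) · (μ/λ)^{i−l} · (1−q(t))^{i+j−2l} · (1 − (μ/λ + 1)(1−q(t)))^l (with the convention p_{i,−1}(t) = 0). Then for each fixed i, the family of functions t ↦ p_{i,j}(t) is differentiable on (0,∞) and satisfies the forward Kolmogorov system: d/dt p_{i,0}(t) = μ p_{i,1}(t) − ν p_{i,0}(t), and for j ≥ 1, d/dt p_{i,j}(t) = (λ(j−1) + ν) p_{i,j−1}(t)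 + μ(j+1) p_{i,j+1}(t) − ((λ+μ)j + ν) p_{i,j}(t); moreover p_{i,i}(0) = 1 and p_{i,j}(0) = 0 for j ≠ i. -/
open Real

open Polynomial in
noncomputable def Qp (c r : ℝ) (i j : ℕ) : ℝ[X] :=
  ∑ l ∈ Finset.range (j+1),
    Polynomial.C ((i.choose l : ℝ) * genBinom (r + i + j - l - 1) (j - l) * c^(i-l))
      * Polynomial.X^(i+j-2*l) * (1 - Polynomial.C (c+1) * Polynomial.X)^l

open Polynomial

lemma genBinom_zero (x : ℝ) : genBinom x 0 = 1 := by simp [genBinom]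

lemma genBinom_one (x : ℝ) : genBinom x 1 = x := by simp [genBinom]

lemma genBinom_succ (x : ℝ) (k : ℕ) :
    ((k : ℝ) + 1) * genBinom x (k + 1) = (x - k) * genBinom x k := by
  have h : (Nat.factorial (k+1) : ℝ) = ((k:ℝ)+1) * (Nat.factorial k : ℝ) := by
    push_cast [Nat.factorial_succ]; ring
  simp only [genBinom, Finset.prod_range_succ, h]
  have hk : (Nat.factorial k : ℝ) ≠ 0 := by positivity
  have hk1 : ((k:ℝ)+1) ≠ 0 := by positivity
  field_simp

lemma genBinom_shift_s3 (y : ℝ) (k : ℕ) :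
    (y - k) * genBinom y k = y * genBinom (y - 1) k := by
  have h1 : ∏ m ∈ Finset.range (k+1), (y - m) =
      (∏ m ∈ Finset.range k, (y - m)) * (y - k) := Finset.prod_range_succ _ _
  have h2 : ∏ m ∈ Finset.range (k+1), (y - m) =
      (∏ m ∈ Finset.range k, (y - (m+1))) * (y - 0) := by
    have := Finset.prod_range_succ' (fun m : ℕ => y - m) k
    push_cast at this ⊢; exact this
  have h3 : ∏ m ∈ Finset.range k, (y - ((m:ℝ)+1)) = ∏ m ∈ Finset.range k, ((y-1) - m) := by
    apply Finset.prod_congr rfl; intro m _; ring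
  simp only [genBinom]
  rw [mul_div_assoc'] at *
  rw [show (y - (k:ℝ)) * ∏ m ∈ Finset.range k, (y - m) = (∏ m ∈ Finset.range k, (y - m)) * (y - k) from mul_comm _ _, ← h1, h2, h3]
  push_cast
  ring

lemma Q0 (c r : ℝ) (j : ℕ) :
    Qp c r 0 j = C (genBinom (r + j - 1) j) * X^j := by
  rw [Qp, Finset.sum_eq_single 0]
  · simp [genBinom_zero]
  · intro l _ hl
    obtain ⟨m, rfl⟩ := Nat.exists_eq_succ_of_ne_zero hl
    simp [Nat.choose_succ_self]  -- 0.choose (m+1) = 0?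
  · intro h; exact absurd (Finset.mem_range.2 (Nat.succ_pos j)) h

lemma Qrec0 (c r : ℝ) (i : ℕ) :
    Qp c r (i+1) 0 = C c * X * Qp c (r+1) i 0 := by
  simp only [Qp, Finset.sum_range_succ, Finset.sum_range_zero, zero_add]
  simp [genBinom_zero, pow_succ]
  ring

lemma Qrec_term (c r : ℝ) (i k l : ℕ) (hl : l ≤ k) :
    C ((((i+1).choose (l+1) : ℕ) : ℝ) * genBinom (r + ((i+1 : ℕ) : ℝ) + ((k+1 : ℕ) : ℝ) - ((l+1 : ℕ) : ℝ) - 1) ((k+1) - (l+1)) * c^((i+1)-(l+1)))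
        * X^((i+1)+(k+1)-2*(l+1)) * (1 - C (c+1)*X)^(l+1)
    = C c * X * (C ((i.choose (l+1) : ℝ) * genBinom ((r+1) + (i : ℝ) + ((k+1 : ℕ) : ℝ) - ((l+1 : ℕ) : ℝ) - 1) ((k+1) - (l+1)) * c^(i-(l+1)))
        * X^(i+(k+1)-2*(l+1)) * (1 - C (c+1)*X)^(l+1))
    + (1 - C (c+1)*X) * (C ((i.choose l : ℝ) * genBinom ((r+1) + (i : ℝ) + (k : ℝ) - (l : ℝ) - 1) (k - l) * c^(i-l))
        * X^(i+k-2*l) * (1 - C (c+1)*X)^l) := by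
  have harg1 : (r + ((i+1 : ℕ) : ℝ) + ((k+1 : ℕ) : ℝ) - ((l+1 : ℕ) : ℝ) - 1)
      = ((r+1) + (i : ℝ) + ((k+1 : ℕ) : ℝ) - ((l+1 : ℕ) : ℝ) - 1) := by push_cast; ring
  have harg2 : (r + ((i+1 : ℕ) : ℝ) + ((k+1 : ℕ) : ℝ) - ((l+1 : ℕ) : ℝ) - 1)
      = ((r+1) + (i : ℝ) + (k : ℝ) - (l : ℝ) - 1) := by push_cast; ring
  have hexpB : (i+1)+(k+1)-2*(l+1) = i+k-2*l := by omega
  have hkl : (k+1) - (l+1) = k - l := by omega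
  rw [Nat.choose_succ_succ', Nat.cast_add]
  rw [show ((i.choose l : ℝ) + (i.choose (l+1) : ℝ)) * genBinom (r + ((i+1:ℕ):ℝ) + ((k+1:ℕ):ℝ) - ((l+1:ℕ):ℝ) - 1) ((k+1)-(l+1)) * c^((i+1)-(l+1))
      = (i.choose l : ℝ) * genBinom (r + ((i+1:ℕ):ℝ) + ((k+1:ℕ):ℝ) - ((l+1:ℕ):ℝ) - 1) ((k+1)-(l+1)) * c^((i+1)-(l+1))
      + (i.choose (l+1) : ℝ) * genBinom (r + ((i+1:ℕ):ℝ) + ((k+1:ℕ):ℝ) - ((l+1:ℕ):ℝ) - 1) ((k+1)-(l+1)) * c^((i+1)-(l+1)) from by ring]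
  rw [C_add, add_mul, add_mul]
  rw [add_comm]
  congr 1
  · -- choose (l+1) part  = C c * X * ...
    by_cases hli : l + 1 ≤ i
    · have h1 : (i+1)-(l+1) = (i-(l+1)) + 1 := by omega
      have h2 : (i+1)+(k+1)-2*(l+1) = (i+(k+1)-2*(l+1)) + 1 := by omega
      rw [harg1, h1, h2, pow_succ, pow_succ]
      simp only [C_mul]
      ring
    · have h0 : i.choose (l+1) = 0 := Nat.choose_eq_zero_of_lt (by omega)
      simp [h0]
  · -- choose l part = (1 - C(c+1)X) * ...
    rw [harg2, hexpB, hkl, pow_succ]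
    have h3 : (i+1)-(l+1) = i - l := by omega
    rw [h3]
    ring

lemma Qrec (c r : ℝ) (i k : ℕ) :
    Qp c r (i+1) (k+1) = C c * X * Qp c (r+1) i (k+1) + (1 - C (c+1) * X) * Qp c (r+1) i k := by
  simp only [Qp, Finset.mul_sum]
  rw [Finset.sum_range_succ' (fun l => C ((((i+1).choose l : ℕ) : ℝ) * genBinom (r + ((i+1 : ℕ) : ℝ) + ((k+1 : ℕ) : ℝ) - (l : ℝ) - 1) ((k+1) - l) * c^((i+1)-l)) * X^((i+1)+(k+1)-2*l) * (1 - C (c+1)*X)^l) (k+1)]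
  rw [Finset.sum_range_succ' (fun l => C c * X * (C ((i.choose l : ℝ) * genBinom ((r+1) + (i : ℝ) + ((k+1 : ℕ) : ℝ) - (l : ℝ) - 1) ((k+1) - l) * c^(i-l)) * X^(i+(k+1)-2*l) * (1 - C (c+1)*X)^l)) (k+1)]
  have key : ∀ l ∈ Finset.range (k+1),
      C ((((i+1).choose (l+1) : ℕ) : ℝ) * genBinom (r + ((i+1 : ℕ) : ℝ) + ((k+1 : ℕ) : ℝ) - ((l+1 : ℕ) : ℝ) - 1) ((k+1) - (l+1)) * c^((i+1)-(l+1))) * X^((i+1)+(k+1)-2*(l+1)) * (1 - C (c+1)*X)^(l+1)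
      = C c * X * (C ((i.choose (l+1) : ℝ) * genBinom ((r+1) + (i : ℝ) + ((k+1 : ℕ) : ℝ) - ((l+1 : ℕ) : ℝ) - 1) ((k+1) - (l+1)) * c^(i-(l+1))) * X^(i+(k+1)-2*(l+1)) * (1 - C (c+1)*X)^(l+1))
      + (1 - C (c+1)*X) * (C ((i.choose l : ℝ) * genBinom ((r+1) + (i : ℝ) + (k : ℝ) - (l : ℝ) - 1) (k - l) * c^(i-l)) * X^(i+k-2*l) * (1 - C (c+1)*X)^l) := by
    intro l hl
    exact Qrec_term c r i k l (by simpa using Nat.lt_succ_iff.mp (Finset.mem_range.mp hl))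
  rw [Finset.sum_congr rfl key, Finset.sum_add_distrib]
  have hf0 : C ((((i+1).choose 0 : ℕ) : ℝ) * genBinom (r + ((i+1 : ℕ) : ℝ) + ((k+1 : ℕ) : ℝ) - ((0:ℕ) : ℝ) - 1) ((k+1) - 0) * c^((i+1)-0)) * X^((i+1)+(k+1)-2*0) * (1 - C (c+1)*X)^0
      = C c * X * (C ((i.choose 0 : ℝ) * genBinom ((r+1) + (i : ℝ) + ((k+1 : ℕ) : ℝ) - ((0:ℕ) : ℝ) - 1) ((k+1) - 0) * c^(i-0)) * X^(i+(k+1)-2*0) * (1 - C (c+1)*X)^0) := by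
    have harg : (r + ((i+1 : ℕ) : ℝ) + ((k+1 : ℕ) : ℝ) - ((0:ℕ) : ℝ) - 1)
        = ((r+1) + (i : ℝ) + ((k+1 : ℕ) : ℝ) - ((0:ℕ) : ℝ) - 1) := by push_cast; ring
    rw [harg]
    simp only [Nat.choose_zero_right, Nat.sub_zero, Nat.mul_zero, pow_zero, mul_one, Nat.cast_one]
    rw [show (i+1)+(k+1) = (i+(k+1))+1 by omega, pow_succ, pow_succ]
    simp only [C_mul]
    ring
  rw [hf0]
  ring

lemma MI_base (c r : ℝ) (j : ℕ) :
    (C c * X - 1) * (C r * Qp c r 0 j - (1 - X) * derivative (Qp c r 0 j))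
      = C ((j:ℝ) - 1 + r) * (if j = 0 then 0 else Qp c r 0 (j-1))
        + C (c*((j:ℝ)+1)) * Qp c r 0 (j+1)
        - C ((1+c)*(j:ℝ) + r) * Qp c r 0 j := by
  rcases j with _ | k
  · rw [if_pos rfl, Q0, Q0]
    rw [show r + ((0+1:ℕ):ℝ) - 1 = r by push_cast; ring, genBinom_one]
    simp only [Nat.cast_zero, pow_zero, pow_one, mul_one, derivative_mul, derivative_C,
      derivative_one, genBinom_zero, C_1, mul_zero, zero_mul, add_zero, zero_add,
      C_mul, C_add, C_sub, C_0]
    ring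
  · rw [if_neg (Nat.succ_ne_zero k), Q0, Q0, Q0]
    have e0 : k + 1 - 1 = k := rfl
    rw [e0]
    have eb1 : (r + ((k+1:ℕ):ℝ) - 1) = r + (k:ℝ) + 1 - 1 := by push_cast; ring
    have eb2 : (r + ((k+1+1:ℕ):ℝ) - 1) = r + (k:ℝ) + 1 := by push_cast; ring
    rw [eb1, eb2]
    have hs1 := genBinom_succ (r + (k:ℝ) + 1) (k+1)
    have hsh1 := genBinom_shift_s3 (r + (k:ℝ) + 1) (k+1)
    have h1 : ((k:ℝ)+1+1) * genBinom (r + (k:ℝ) + 1) (k+1+1)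
        = (r+(k:ℝ)+1) * genBinom (r + (k:ℝ) + 1 - 1) (k+1) := by
      push_cast at hs1 hsh1
      linear_combination hs1 + hsh1
    have hs2 := genBinom_succ (r + (k:ℝ) + 1 - 1) k
    have hsh2 := genBinom_shift_s3 (r + (k:ℝ)) k
    have h2 : ((k:ℝ)+1) * genBinom (r + (k:ℝ) + 1 - 1) (k+1)
        = (r+(k:ℝ)) * genBinom (r + (k:ℝ) - 1) k := by
      push_cast at hs2 hsh2
      have e : r + (k:ℝ) + 1 - 1 = r + (k:ℝ) := by ring
      rw [e] at hs2 ⊢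
      linear_combination hs2 + hsh2
    have H1 := congrArg (C : ℝ → ℝ[X]) h1
    have H2 := congrArg (C : ℝ → ℝ[X]) h2
    simp only [C_mul, C_add, C_sub, C_0, C_1] at H1 H2
    simp only [derivative_mul, derivative_C, derivative_X_pow]
    rw [show (k+1) - 1 = k from rfl, show k+1+1 = k+2 from rfl] at *
    rw [show (X:ℝ[X])^(k+1) = X^k * X from pow_succ _ _,
        show (X:ℝ[X])^(k+2) = X^k * X * X from by rw [pow_succ, pow_succ]]
    push_cast
    simp only [C_mul, C_add, C_sub, C_0, C_1]
    linear_combination (-(C c * X^k * X * X)) * H1 + X^k * H2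

lemma MI (c : ℝ) : ∀ (i : ℕ) (r : ℝ) (j : ℕ),
    (C c * X - 1) * (C r * Qp c r i j - (1 - X) * derivative (Qp c r i j))
      = C ((j:ℝ) - 1 + r) * (if j = 0 then 0 else Qp c r i (j-1))
        + C (c*((j:ℝ)+1)) * Qp c r i (j+1)
        - C ((1+c)*(j:ℝ) + r) * Qp c r i j := by
  intro i
  induction i with
  | zero => exact fun r j => MI_base c r j
  | succ i ih =>
    intro r j
    rcases j with _ | j'
    · rw [if_pos rfl, Qrec0 c r i, Qrec c r i 0]
      have I0 := ih (r+1) 0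
      rw [if_pos rfl] at I0
      simp only [derivative_mul, derivative_C, derivative_X, derivative_one, derivative_sub,
        derivative_add, mul_one, one_mul, zero_mul, mul_zero, zero_sub, add_zero, zero_add] at *
      push_cast at I0 ⊢
      simp only [C_mul, C_add, C_sub, C_0, C_1] at I0 ⊢
      linear_combination (C c * X) * I0
    · rw [if_neg (Nat.succ_ne_zero j'), Qrec c r i j', Qrec c r i (j'+1),
        show j'+1-1 = j' from rfl]
      have Ia := ih (r+1) (j'+1)
      rw [if_neg (Nat.succ_ne_zero j'), show j'+1-1 = j' from rfl] at Ia
      have Ib := ih (r+1) j'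
      rcases j' with _ | k
      · rw [if_pos rfl] at Ib
        rw [Qrec0 c r i]
        simp only [derivative_mul, derivative_C, derivative_X, derivative_one, derivative_sub,
          derivative_add, mul_one, one_mul, zero_mul, mul_zero, zero_sub, add_zero, zero_add] at *
        push_cast at Ia Ib ⊢
        simp only [C_mul, C_add, C_sub, C_0, C_1] at Ia Ib ⊢
        linear_combination (C c * X) * Ia + (1 - (C c + 1) * X) * Ib
      · rw [if_neg (Nat.succ_ne_zero k), show k+1-1 = k from rfl] at Ib
        rw [Qrec c r i k]
        simp only [derivative_mul, derivative_C, derivative_X, derivative_one, derivative_sub,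
          derivative_add, mul_one, one_mul, zero_mul, mul_zero, zero_sub, add_zero, zero_add] at *
        push_cast at Ia Ib ⊢
        simp only [C_mul, C_add, C_sub, C_0, C_1] at Ia Ib ⊢
        linear_combination (C c * X) * Ia + (1 - (C c + 1) * X) * Ib

lemma Qp_eval (c r x : ℝ) (i j : ℕ) :
    eval x (Qp c r i j) = ∑ l ∈ Finset.range (min i j + 1),
      (i.choose l : ℝ) * genBinom (r + i + j - l - 1) (j - l) * c^(i-l)
        * (x:ℝ)^(i+j-2*l) * (1 - (c+1)*x)^l := by
  rw [Qp, eval_finset_sum]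
  have hterm : ∀ l, eval x (C ((i.choose l : ℝ) * genBinom (r + i + j - l - 1) (j - l) * c^(i-l))
      * X^(i+j-2*l) * (1 - C (c+1) * X)^l)
      = (i.choose l : ℝ) * genBinom (r + i + j - l - 1) (j - l) * c^(i-l)
        * x^(i+j-2*l) * (1 - (c+1)*x)^l := by
    intro l; simp [eval_mul, eval_pow, eval_C, eval_X, eval_one, eval_sub]
  rcases le_or_gt j i with h | h
  · rw [min_eq_right h]
    exact Finset.sum_congr rfl fun l _ => hterm l
  · rw [min_eq_left h.le]
    rw [← Finset.sum_subset (Finset.range_subset_range.2 (by omega : i + 1 ≤ j + 1))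
      (fun l _ hl => ?_)]
    · exact Finset.sum_congr rfl fun l _ => hterm l
    · have hil : i < l := by
        rcases Finset.mem_range.mp ‹l ∈ Finset.range (j+1)› with _
        by_contra hc
        exact hl (Finset.mem_range.mpr (by omega))
      rw [hterm l, Nat.choose_eq_zero_of_lt hil]
      simp

lemma pTrans_eq (lam mu nu : ℝ) (i j : ℕ) (t : ℝ) :
    pTrans lam mu nu i j t
      = qfun lam mu t ^ (nu / lam) * eval (1 - qfun lam mu t) (Qp (mu/lam) (nu/lam) i j) := by
  rw [pTrans, Qp_eval]

lemma qden_pos (lam mu : ℝ) (hlam : 0 < lam) (hlm : lam < mu) {t : ℝ} (ht : 0 ≤ t) :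
    0 < mu - lam * exp ((lam - mu) * t) := by
  have h1 : exp ((lam - mu) * t) ≤ 1 := by
    rw [← Real.exp_zero]
    apply Real.exp_le_exp.2
    nlinarith
  nlinarith

lemma q_pos (lam mu : ℝ) (hlam : 0 < lam) (hlm : lam < mu) {t : ℝ} (ht : 0 ≤ t) :
    0 < qfun lam mu t :=
  div_pos (by linarith) (qden_pos lam mu hlam hlm ht)

lemma q_zero (lam mu : ℝ) (hlm : lam < mu) : qfun lam mu 0 = 1 := by
  rw [qfun, mul_zero, Real.exp_zero, mul_one, div_self (by linarith)]

lemma hasDerivAt_q (lam mu : ℝ) (hlam : 0 < lam) (hlm : lam < mu) {t : ℝ} (ht : 0 ≤ t) :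
    HasDerivAt (qfun lam mu)
      ((mu - lam) * qfun lam mu t - mu * (qfun lam mu t)^2) t := by
  have hden := qden_pos lam mu hlam hlm ht
  have h1 : HasDerivAt (fun τ : ℝ => (lam - mu) * τ) (lam - mu) t := by
    simpa using (hasDerivAt_id t).const_mul (lam - mu)
  have h2 : HasDerivAt (fun τ : ℝ => exp ((lam - mu) * τ))
      (exp ((lam - mu) * t) * (lam - mu)) t := h1.exp
  have h3 : HasDerivAt (fun τ : ℝ => mu - lam * exp ((lam - mu) * τ))
      (-(lam * (exp ((lam - mu) * t) * (lam - mu)))) t := (h2.const_mul lam).const_sub mu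
  have h4 := (hasDerivAt_const t (mu - lam)).div h3 (ne_of_gt hden)
  refine HasDerivAt.congr_deriv h4 (Eq.symm ?_)
  rw [qfun]
  have hd := ne_of_gt hden
  field_simp
  ring

lemma key (lam mu nu : ℝ) (i : ℕ) (hlam : 0 < lam) (hlm : lam < mu) (j : ℕ) {t : ℝ}
    (ht : 0 < t) :
    HasDerivAt (fun τ => pTrans lam mu nu i j τ)
      ((lam * ((j:ℝ) - 1) + nu) * (if j = 0 then 0 else pTrans lam mu nu i (j-1) t)
        + mu * ((j:ℝ) + 1) * pTrans lam mu nu i (j+1) t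
        - ((lam + mu) * (j:ℝ) + nu) * pTrans lam mu nu i j t) t := by
  have hlam' := hlam.ne'
  set c := mu / lam with hc0
  set r := nu / lam with hr0
  have hlc : lam * c = mu := by rw [hc0]; field_simp
  have hlr : lam * r = nu := by rw [hr0]; field_simp
  have hq := hasDerivAt_q lam mu hlam hlm ht.le
  have hqpos := q_pos lam mu hlam hlm ht.le
  set q := qfun lam mu t with hqdef
  have hne : q ≠ 0 := ne_of_gt hqpos
  have hrpow : HasDerivAt (fun τ => qfun lam mu τ ^ r)
      (((mu - lam) * q - mu * q^2) * r * q ^ (r - 1)) t := hq.rpow_const (Or.inl hne)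
  have hinner : HasDerivAt (fun τ : ℝ => 1 - qfun lam mu τ)
      (0 - ((mu - lam) * q - mu * q^2)) t := (hasDerivAt_const t 1).sub hq
  have hcomp : HasDerivAt (fun τ => eval (1 - qfun lam mu τ) (Qp c r i j))
      (eval (1 - q) (derivative (Qp c r i j)) * (0 - ((mu - lam) * q - mu * q^2))) t := by
    have h := ((Qp c r i j).hasDerivAt (1 - q)).comp t hinner
    simpa [Function.comp_def] using h
  have hmul := hrpow.mul hcomp
  have hfun : (fun τ => pTrans lam mu nu i j τ)
      = (fun τ => qfun lam mu τ ^ r * eval (1 - qfun lam mu τ) (Qp c r i j)) := by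
    funext τ; exact pTrans_eq lam mu nu i j τ
  rw [hfun]
  refine HasDerivAt.congr_deriv hmul (Eq.symm ?_)
  -- value identity
  have He := congrArg (eval (1 - q)) (MI c i r j)
  simp only [eval_mul, eval_add, eval_sub, eval_C, eval_X, eval_one, apply_ite (eval (1 - q)),
    eval_zero] at He
  have hq1 : q ^ (r - 1) * q = q ^ r := by
    have h := (Real.rpow_add hqpos (r-1) 1).symm
    simpa using h
  simp only [pTrans_eq lam mu nu i _ t, ← hqdef, ← hc0, ← hr0]
  rcases j with _ | j'
  · rw [← hlc, ← hlr]
    push_cast at He ⊢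
    linear_combination (-(lam * q ^ r)) * He
      - (lam * (c*(1-q) - 1) * r * eval (1-q) (Qp c r i 0)) * hq1
  · rw [← hlc, ← hlr]
    push_cast at He ⊢
    linear_combination (-(lam * q ^ r)) * He
      - (lam * (c*(1-q) - 1) * r * eval (1-q) (Qp c r i (j'+1))) * hq1

/-- The transition probabilities `p_{i,j}` are differentiable in `t` on `(0,∞)` and satisfy
the forward Kolmogorov system, together with the initial conditions
`p_{i,i}(0) = 1` and `p_{i,j}(0) = 0` for `j ≠ i`. -/
theorem stmt_3 (lam mu nu : ℝ) (i : ℕ)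
    (hlam : 0 < lam) (hlm : lam < mu) (hnu : 0 < nu) :
    (∀ j : ℕ, ∀ t ∈ Set.Ioi (0 : ℝ),
      DifferentiableAt ℝ (fun τ => pTrans lam mu nu i j τ) t) ∧
    (∀ t ∈ Set.Ioi (0 : ℝ),
      deriv (fun τ => pTrans lam mu nu i 0 τ) t
        = mu * pTrans lam mu nu i 1 t - nu * pTrans lam mu nu i 0 t) ∧
    (∀ j : ℕ, 1 ≤ j → ∀ t ∈ Set.Ioi (0 : ℝ),
      deriv (fun τ => pTrans lam mu nu i j τ) t
        = (lam * ((j : ℝ) - 1) + nu) * pTrans lam mu nu i (j - 1) t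
          + mu * ((j : ℝ) + 1) * pTrans lam mu nu i (j + 1) t
          - ((lam + mu) * (j : ℝ) + nu) * pTrans lam mu nu i j t) ∧
    pTrans lam mu nu i i 0 = 1 ∧
    (∀ j : ℕ, j ≠ i → pTrans lam mu nu i j 0 = 0) := by
  refine ⟨?_, ?_, ?_, ?_, ?_⟩
  · exact fun j t ht => (key lam mu nu i hlam hlm j ht).differentiableAt
  · intro t ht
    rw [(key lam mu nu i hlam hlm 0 ht).deriv]
    norm_num
  · intro j hj t ht
    rw [(key lam mu nu i hlam hlm j ht).deriv, if_neg (by omega)]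
  · rw [pTrans, q_zero lam mu hlm, Real.one_rpow, one_mul, sub_self, min_self]
    rw [Finset.sum_eq_single i]
    · simp [genBinom_zero, show i + i - 2 * i = 0 by omega]
    · intro l hl hli
      have hl' : l < i := by
        have := Finset.mem_range.mp hl; omega
      rw [zero_pow (by omega : i + i - 2*l ≠ 0)]
      ring
    · intro h; exact absurd (Finset.mem_range.mpr (by omega)) h
  · intro j hji
    rw [pTrans, q_zero lam mu hlm, Real.one_rpow, one_mul, sub_self]
    apply Finset.sum_eq_zero
    intro l hl
    have hl' : l ≤ i ∧ l ≤ j := by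
      have := Finset.mem_range.mp hl
      constructor <;> omega
    rw [zero_pow (by omega : i + j - 2*l ≠ 0)]
    ring
end

section
/- Let α, β be real numbers with |β| < 1, let i ≥ 1 be a natural number, and let s be a real number with |s| ≤ 1 and 1 − βs ≠ 0. Then the series Σ_{j=0}^{∞} c_j s^j, with coefficients c_j = Σ_{l=0}^{min(i,j)} C(i,l) · C(i+j−l−1, i−1) · α^{i−l} · β^{j−l} · (1−α−β)^l, converges (in the sense of HasSum) with sum equal to ( (α + (1−α−β)s) / (1 − βs) )^i. -/
/-- Power series expansion of the probability generating function
`s ↦ ((α + (1-α-β)s)/(1-βs))^i` of the linear birth–death process without immigration: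
its coefficients are `c_j = Σ_{l=0}^{min(i,j)} C(i,l) C(i+j-l-1, i-1) α^{i-l} β^{j-l} (1-α-β)^l`. -/
theorem stmt_5 (a b : ℝ) (hb : |b| < 1) (i : ℕ) (hi : 1 ≤ i) (s : ℝ)
    (hs : |s| ≤ 1) (hbs : 1 - b * s ≠ 0) :
    HasSum
      (fun j : ℕ =>
        (∑ l ∈ Finset.range (min i j + 1),
            (i.choose l : ℝ) * ((i + j - l - 1).choose (i - 1) : ℝ) *
              a ^ (i - l) * b ^ (j - l) * (1 - a - b) ^ l) * s ^ j)
      (((a + (1 - a - b) * s) / (1 - b * s)) ^ i) := by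
  have hbs1 : ‖b * s‖ < 1 := by
    rw [Real.norm_eq_abs, abs_mul]
    calc |b| * |s| ≤ |b| * 1 := mul_le_mul_of_nonneg_left hs (abs_nonneg b)
      _ = |b| := mul_one _
      _ < 1 := hb
  -- negative binomial series
  have base : HasSum (fun k : ℕ => (((k + (i - 1)).choose (i - 1) : ℝ)) * (b * s) ^ k)
      (1 / (1 - b * s) ^ i) := by
    have := hasSum_choose_mul_geometric_of_norm_lt_one (𝕜 := ℝ) (i - 1) hbs1
    rwa [Nat.sub_add_cancel hi] at this
  -- shifted, scaled series for each l
  set F : ℕ → ℕ → ℝ := fun l j =>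
    if l ≤ j then
      (i.choose l : ℝ) * a ^ (i - l) * (1 - a - b) ^ l * s ^ l *
        ((((j - l) + (i - 1)).choose (i - 1) : ℝ) * (b * s) ^ (j - l))
    else 0 with hF
  have hFl : ∀ l, HasSum (F l)
      ((i.choose l : ℝ) * a ^ (i - l) * (1 - a - b) ^ l * s ^ l * (1 / (1 - b * s) ^ i)) := by
    intro l
    have h1 := base.mul_left ((i.choose l : ℝ) * a ^ (i - l) * (1 - a - b) ^ l * s ^ l)
    have hinj : Function.Injective (fun k : ℕ => k + l) := fun x y h => by
      simpa using h
    have h0 : ∀ j ∉ Set.range (fun k : ℕ => k + l), F l j = 0 := by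
      intro j hj
      have : j < l := by
        by_contra h
        refine hj ⟨j - l, ?_⟩
        simp only []
        omega
      simp [hF, Nat.not_le.mpr this]
    have key : HasSum ((F l) ∘ (fun k : ℕ => k + l))
        ((i.choose l : ℝ) * a ^ (i - l) * (1 - a - b) ^ l * s ^ l * (1 / (1 - b * s) ^ i)) := by
      refine (congrArg (fun f => HasSum f _) ?_).mpr h1
      funext k
      simp only [hF, Function.comp]
      rw [if_pos (by omega : l ≤ k + l), Nat.add_sub_cancel]
    exact (Function.Injective.hasSum_iff hinj h0).mp key
  -- identify the function
  have hfun : (fun j : ℕ =>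
        (∑ l ∈ Finset.range (min i j + 1),
            (i.choose l : ℝ) * ((i + j - l - 1).choose (i - 1) : ℝ) *
              a ^ (i - l) * b ^ (j - l) * (1 - a - b) ^ l) * s ^ j)
      = (fun j => ∑ l ∈ Finset.range (i + 1), F l j) := by
    funext j
    rw [Finset.sum_mul]
    rw [show Finset.range (i + 1) = Finset.range (min i j + 1) ∪
        ((Finset.range (i + 1)).filter (fun l => ¬ l ≤ j)) from ?_]
    · rw [Finset.sum_union ?_]
      · have h2 : ∑ l ∈ (Finset.range (i + 1)).filter (fun l => ¬ l ≤ j), F l j = 0 := by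
          apply Finset.sum_eq_zero
          intro l hl
          simp only [Finset.mem_filter] at hl
          simp [hF, hl.2]
        rw [h2, add_zero]
        apply Finset.sum_congr rfl
        intro l hl
        simp only [Finset.mem_range] at hl
        have hli : l ≤ i := by omega
        have hlj : l ≤ j := by omega
        simp only [hF, if_pos hlj]
        have hc : (j - l) + (i - 1) = i + j - l - 1 := by omega
        have hss : s ^ (j - l) * s ^ l = s ^ j := by
          rw [← pow_add, Nat.sub_add_cancel hlj]
        rw [hc, mul_pow, ← hss]
        ring
      · rw [Finset.disjoint_left]
        intro l hl hl2
        simp only [Finset.mem_range] at hl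
        simp only [Finset.mem_filter] at hl2
        omega
    · ext l
      simp only [Finset.mem_union, Finset.mem_range, Finset.mem_filter]
      omega
  -- identify the value
  have hval : (∑ l ∈ Finset.range (i + 1),
        (i.choose l : ℝ) * a ^ (i - l) * (1 - a - b) ^ l * s ^ l * (1 / (1 - b * s) ^ i))
      = ((a + (1 - a - b) * s) / (1 - b * s)) ^ i := by
    rw [← Finset.sum_mul, div_pow, div_eq_mul_one_div]
    congr 1
    · rw [add_comm a ((1 - a - b) * s), add_pow]
      exact Finset.sum_congr rfl fun l hl => by rw [mul_pow]; ring
    · rw [one_mul, one_div]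
  rw [hfun, ← hval]
  exact hasSum_sum (fun l _ => hFl l)
end

section
/- Let 0 < λ < μ, ν > 0 be real numbers, t ≥ 0 and i a natural number. Define G_i(s,t) = (μ−λ)^{ν/λ} · ( s(μe^{(λ−μ)t} − λ) − μ(e^{(λ−μ)t} − 1) )^i / ( μ − λe^{(λ−μ)t} + λs(e^{(λ−μ)t} − 1) )^{ν/λ + i} as a function of s on a neighborhood of s = 1. Then the derivative of s ↦ G_i(s,t) at s = 1 equals (ν/(λ−μ))·(e^{(λ−μ)t} − 1) + i·e^{(λ−μ)t}. -/
open Real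

lemma aux_pow_pred (a : ℝ) (ha : a ≠ 0) (i : ℕ) :
    (i : ℝ) * a ^ (i - 1) = (i : ℝ) * a ^ i / a := by
  cases i with
  | zero => simp
  | succ n => field_simp [pow_succ]; rw [Nat.add_sub_cancel, pow_succ]

/-- The derivative of `s ↦ G_i(s,t)` at `s = 1` equals the mean
`m(t) = (ν/(λ-μ))(e^{(λ-μ)t} - 1) + i e^{(λ-μ)t}` of the process. -/
theorem stmt_6 (lam mu nu t : ℝ) (i : ℕ)
    (hlam : 0 < lam) (hlm : lam < mu) (hnu : 0 < nu) (ht : 0 ≤ t) :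
    deriv (fun s => G lam mu nu i s t) 1
      = nu / (lam - mu) * (exp ((lam - mu) * t) - 1) + (i : ℝ) * exp ((lam - mu) * t) := by
  simp only [G]
  set E := exp ((lam - mu) * t) with hE
  have ha0 : (0:ℝ) < mu - lam := by linarith
  have hane : mu - lam ≠ 0 := ne_of_gt ha0
  set a := mu - lam with ha
  set p := nu / lam with hp
  have hnum : HasDerivAt (fun s : ℝ => s * (mu * E - lam) - mu * (E - 1)) (mu * E - lam) 1 := by
    simpa using ((hasDerivAt_id (1:ℝ)).mul_const (mu * E - lam)).sub_const (mu * (E - 1))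
  have hnumv : (1:ℝ) * (mu * E - lam) - mu * (E - 1) = a := by rw [ha]; ring
  have hN : HasDerivAt (fun s : ℝ => (s * (mu * E - lam) - mu * (E - 1)) ^ i)
      ((i : ℝ) * a ^ (i - 1) * (mu * E - lam)) 1 := by
    have := hnum.pow i
    rw [hnumv] at this
    exact this
  have hden : HasDerivAt (fun s : ℝ => mu - lam * E + lam * s * (E - 1)) (lam * (E - 1)) 1 := by
    have h1 : HasDerivAt (fun s : ℝ => mu - lam * E + lam * s * (E - 1))
        (0 + 1 * (lam * (E-1))) 1 := by
      refine (hasDerivAt_const (1:ℝ) (mu - lam * E)).add ?_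
      simpa [mul_assoc, mul_comm, mul_left_comm] using
        (hasDerivAt_id (1:ℝ)).mul_const (lam * (E - 1))
    simpa using h1
  have hdenv : mu - lam * E + lam * 1 * (E - 1) = a := by rw [ha]; ring
  have hD : HasDerivAt (fun s : ℝ => (mu - lam * E + lam * s * (E - 1)) ^ (p + (i:ℝ)))
      ((p + i) * a ^ (p + (i:ℝ) - 1) * (lam * (E - 1))) 1 := by
    have := hden.rpow_const (p := p + (i:ℝ)) (by rw [hdenv]; exact Or.inl hane)
    rw [hdenv] at this
    convert this using 1
    ring
  have hDne : (mu - lam * E + lam * 1 * (E - 1)) ^ (p + (i:ℝ)) ≠ 0 := by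
    rw [hdenv]; exact (Real.rpow_pos_of_pos ha0 _).ne'
  have hG := (hN.const_mul (a ^ p)).div hD hDne
  have hG' : HasDerivAt (fun s : ℝ => a ^ p * (s * (mu * E - lam) - mu * (E - 1)) ^ i / (mu - lam * E + lam * s * (E - 1)) ^ (p + (i:ℝ))) _ 1 := hG
  rw [hG'.deriv]
  rw [hnumv, hdenv]
  have hlamne : lam ≠ 0 := ne_of_gt hlam
  have hXne : a ^ p ≠ 0 := (Real.rpow_pos_of_pos ha0 _).ne'
  have hYne : a ^ i ≠ 0 := pow_ne_zero _ hane
  have h1 : a ^ (p + (i:ℝ)) = a ^ p * a ^ i := by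
    rw [Real.rpow_add ha0, Real.rpow_natCast]
  have h2 : a ^ (p + (i:ℝ) - 1) = a ^ p * a ^ i / a := by
    rw [Real.rpow_sub ha0, Real.rpow_one, h1]
  rw [aux_pow_pred a hane i, h1, h2]
  have hlmne2 : lam - mu ≠ 0 := by rw [ha] at hane; intro h; apply hane; linarith
  rw [hp]
  field_simp
  ring
end

section
/- Fix Δt > 0. The map sending (λ, μ, ν) with 0 < λ < μ and ν > 0 to the triple (q^r, r·q^r·(1−q), (μ/λ)·q^r·(1−q)), where q = (μ−λ)/(μ − λe^{(λ−μ)Δt}) and r = ν/λ, is injective on the set {(λ, μ, ν) ∈ ℝ³ : 0 < λ < μ, 0 < ν}. -/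
open Real

lemma logdiv_hasDerivAt {q : ℝ} (hq : q ∈ Set.Ioo (0:ℝ) 1) :
    HasDerivAt (fun x : ℝ => Real.log x / (1 - x))
      ((1 / q) * (1 - q)⁻¹ + Real.log q * ((1 - q) ^ 2)⁻¹) q := by
  obtain ⟨h0, h1⟩ := hq
  have hne : (1 : ℝ) - q ≠ 0 := by intro h; nlinarith [h]
  have hlog : HasDerivAt Real.log (1 / q) q := by simpa [one_div] using Real.hasDerivAt_log (ne_of_gt h0)
  have hsub : HasDerivAt (fun x : ℝ => 1 - x) (-1) q := by
    simpa [Pi.sub_def] using (hasDerivAt_const q (1 : ℝ)).sub (hasDerivAt_id q)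
  have hinv : HasDerivAt (fun x : ℝ => (1 - x)⁻¹) (((1 - q) ^ 2)⁻¹) q := by
    have h := hsub.inv hne
    simpa [Pi.inv_def, div_eq_mul_inv] using h
  have h := hlog.mul hinv
  simpa [div_eq_mul_inv, Pi.mul_def] using h

lemma logdiv_strictMono : StrictMonoOn (fun q : ℝ => Real.log q / (1 - q)) (Set.Ioo 0 1) := by
  apply strictMonoOn_of_deriv_pos (convex_Ioo 0 1)
  · intro x hx
    exact ((logdiv_hasDerivAt hx).continuousAt).continuousWithinAt
  · intro x hx
    rw [interior_Ioo] at hx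
    rw [(logdiv_hasDerivAt hx).deriv]
    obtain ⟨h0, h1⟩ := hx
    have hxinv : (1 : ℝ) < x⁻¹ := by
      rw [lt_inv_comm₀ (by norm_num) h0]; simpa using h1
    have hlog := Real.log_lt_sub_one_of_pos (x := x⁻¹) (by positivity) (ne_of_gt hxinv)
    rw [Real.log_inv] at hlog
    have key : 0 < 1 / x - 1 + Real.log x := by
      rw [one_div]; linarith
    have h1x : (0 : ℝ) < 1 - x := by linarith
    have heq : (1 / x) * (1 - x)⁻¹ + Real.log x * ((1 - x) ^ 2)⁻¹
        = (1 / x - 1 + Real.log x) / (1 - x) ^ 2 := by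
      field_simp
    rw [heq]
    positivity

/-- Identifiability: the map `(λ, μ, ν) ↦ (p₀₀(Δt), p₀₁(Δt), p₁₀(Δt))` sending the parameters
to the three one-step transition probabilities `q^r`, `r q^r (1-q)`, `(μ/λ) q^r (1-q)`
(with `q = (μ-λ)/(μ - λe^{(λ-μ)Δt})` and `r = ν/λ`) is injective on
`{(λ, μ, ν) : 0 < λ < μ, 0 < ν}`. -/
theorem stmt_10 (Δt : ℝ) (hΔt : 0 < Δt) :
    Set.InjOn
      (fun p : ℝ × ℝ × ℝ =>
        ((((p.2.1 - p.1) / (p.2.1 - p.1 * exp ((p.1 - p.2.1) * Δt))) ^ (p.2.2 / p.1) : ℝ),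
         ((p.2.2 / p.1) *
            ((p.2.1 - p.1) / (p.2.1 - p.1 * exp ((p.1 - p.2.1) * Δt))) ^ (p.2.2 / p.1) *
            (1 - (p.2.1 - p.1) / (p.2.1 - p.1 * exp ((p.1 - p.2.1) * Δt))) : ℝ),
         ((p.2.1 / p.1) *
            ((p.2.1 - p.1) / (p.2.1 - p.1 * exp ((p.1 - p.2.1) * Δt))) ^ (p.2.2 / p.1) *
            (1 - (p.2.1 - p.1) / (p.2.1 - p.1 * exp ((p.1 - p.2.1) * Δt))) : ℝ)))
      {p : ℝ × ℝ × ℝ | 0 < p.1 ∧ p.1 < p.2.1 ∧ 0 < p.2.2} := by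
  rintro ⟨l1, m1, n1⟩ ⟨hl1, hlm1, hn1⟩ ⟨l2, m2, n2⟩ ⟨hl2, hlm2, hn2⟩ heq
  simp only [Prod.mk.injEq] at heq ⊢
  obtain ⟨h1, h2, h3⟩ := heq
  set E1 := exp ((l1 - m1) * Δt) with hE1def
  set E2 := exp ((l2 - m2) * Δt) with hE2def
  have hE1pos : 0 < E1 := exp_pos _
  have hE2pos : 0 < E2 := exp_pos _
  have hE1lt : E1 < 1 := by
    rw [hE1def, exp_lt_one_iff]
    nlinarith
  have hE2lt : E2 < 1 := by
    rw [hE2def, exp_lt_one_iff]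
    nlinarith
  have hD1pos : 0 < m1 - l1 * E1 := by nlinarith
  have hD2pos : 0 < m2 - l2 * E2 := by nlinarith
  set q1 := (m1 - l1) / (m1 - l1 * E1) with hq1def
  set q2 := (m2 - l2) / (m2 - l2 * E2) with hq2def
  set r1 := n1 / l1 with hr1def
  set r2 := n2 / l2 with hr2def
  have hq1pos : 0 < q1 := div_pos (by linarith) hD1pos
  have hq2pos : 0 < q2 := div_pos (by linarith) hD2pos
  have hq1lt1 : q1 < 1 := (div_lt_one hD1pos).mpr (by nlinarith)
  have hq2lt1 : q2 < 1 := (div_lt_one hD2pos).mpr (by nlinarith)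
  have h1q1 : 0 < 1 - q1 := by linarith
  have h1q2 : 0 < 1 - q2 := by linarith
  have hr1 : 0 < r1 := div_pos hn1 hl1
  have hr2 : 0 < r2 := div_pos hn2 hl2
  have hA2 : (0 : ℝ) < q2 ^ r2 := rpow_pos_of_pos hq2pos r2
  rw [h1] at h2 h3
  have hs : r1 * (1 - q1) = r2 * (1 - q2) := by
    apply mul_left_cancel₀ (ne_of_gt hA2)
    linear_combination h2
  have hlog : r1 * Real.log q1 = r2 * Real.log q2 := by
    rw [← Real.log_rpow hq1pos, ← Real.log_rpow hq2pos, h1]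
  have hf : Real.log q1 / (1 - q1) = Real.log q2 / (1 - q2) := by
    rw [div_eq_div_iff (ne_of_gt h1q1) (ne_of_gt h1q2)]
    apply mul_left_cancel₀ (show r1 * r2 ≠ 0 by positivity)
    linear_combination (r2 * (1 - q2)) * hlog - (r2 * Real.log q2) * hs
  have hq : q1 = q2 :=
    logdiv_strictMono.injOn ⟨hq1pos, hq1lt1⟩ ⟨hq2pos, hq2lt1⟩ hf
  rw [hq] at hs
  have hr : r1 = r2 := mul_right_cancel₀ (ne_of_gt h1q2) hs
  rw [hq] at h3
  have hm : m1 / l1 = m2 / l2 := by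
    have h3' := mul_right_cancel₀ (ne_of_gt h1q2) h3
    exact mul_right_cancel₀ (ne_of_gt hA2) h3'
  have hm' : m1 * l2 = m2 * l1 := (div_eq_div_iff (ne_of_gt hl1) (ne_of_gt hl2)).mp hm
  have e1 : q1 * (m1 - l1 * E1) = m1 - l1 := by
    rw [hq1def]; field_simp
  have e2 : q1 * (m2 - l2 * E2) = m2 - l2 := by
    rw [hq, hq2def]; field_simp
  have hEE : E1 = E2 := by
    have key : l1 * l2 * q1 * E1 = l1 * l2 * q1 * E2 := by
      linear_combination (-l2) * e1 + l1 * e2 + (q1 - 1) * hm'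
    exact mul_left_cancel₀ (by positivity) key
  have hexp : exp ((l1 - m1) * Δt) = exp ((l2 - m2) * Δt) := by
    rw [← hE1def, ← hE2def]; exact hEE
  have hd : l1 - m1 = l2 - m2 :=
    mul_right_cancel₀ (ne_of_gt hΔt) (exp_eq_exp.mp hexp)
  have hll : l1 = l2 := by
    have hz : (m1 - l1) * (l1 - l2) = 0 := by
      linear_combination (-l1) * hd - hm'
    rcases mul_eq_zero.mp hz with h | h
    · linarith
    · linarith
  have hmm : m1 = m2 := by linarith
  refine ⟨hll, hmm, ?_⟩
  have hn : n1 * l2 = n2 * l1 := (div_eq_div_iff (ne_of_gt hl1) (ne_of_gt hl2)).mp hr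
  rw [hll] at hn
  exact mul_right_cancel₀ (ne_of_gt hl2) hn
end

section
/- Let S and O be finite types, Q : S → S → ℝ, ψ : S → O → ℝ, ρ : S → ℝ, T ≥ 2 a natural number and y : {1,…,T} → O. For a path z : {1,…,T} → S let w(z) = ρ(z₁)·ψ(z₁, y₁)·∏_{u=2}^{T} Q(z_{u−1}, z_u)·ψ(z_u, y_u). Define the forward quantities α and backward quantities β by the recursions α_s(1) = ρ(s)·ψ(s, y₁), α_s(t) = ψ(s, y_t)·Σ_{s'} α_{s'}(t−1)·Q(s', s) for 2 ≤ t ≤ T, and β_s(T) = 1, β_s(t) = Σ_{s'} Q(s, s')·ψ(s', y_{t+1})·β_{s'}(t+1) for 1 ≤ t ≤ T−1. Then for every 1 ≤ t ≤ T−1 and every s, s' ∈ S, α_s(t)·Q(s, s')·ψ(s', y_{t+1})·β_{s'}(t+1) = Σ over all paths z : {1,…,T} → S with z(t) = s and z(t+1) = s' of w(z). -/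
set_option linter.unusedSectionVars false

open Finset

namespace BW15

variable {S O : Type*} [Fintype S] [DecidableEq S] [Nonempty S]

/-- Extend a finite tuple to all of `ℕ`. -/
noncomputable def ex {n : ℕ} (z : Fin n → S) (i : ℕ) : S :=
  if h : i < n then z ⟨i, h⟩ else Classical.arbitrary S

lemma ex_lt {n : ℕ} (z : Fin n → S) {i : ℕ} (h : i < n) : ex z i = z ⟨i, h⟩ := dif_pos h

variable (Q : S → S → ℝ) (ψ : S → O → ℝ) (ρ : S → ℝ) (y : ℕ → O)

/-- prefix path weight (path of length `t`, times `1..t`). -/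
def pw (t : ℕ) (z : ℕ → S) : ℝ :=
  ρ (z 0) * ψ (z 0) (y 1) *
    ∏ u ∈ Finset.range (t - 1), (Q (z u) (z (u + 1)) * ψ (z (u + 1)) (y (u + 2)))

/-- suffix path weight starting at time `t` with `k` transitions. -/
def sw (t k : ℕ) (z : ℕ → S) : ℝ :=
  ∏ u ∈ Finset.range k, (Q (z u) (z (u + 1)) * ψ (z (u + 1)) (y (t + u + 1)))

lemma filter_one (s : S) :
    (univ.filter (fun z : Fin 1 → S => ex z 0 = s)) = {fun _ => s} := by
  ext z
  simp only [mem_filter, mem_univ, true_and, mem_singleton]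
  rw [ex_lt z (by norm_num : (0:ℕ) < 1)]
  constructor
  · intro h; funext i
    have : i = ⟨0, by norm_num⟩ := Subsingleton.elim _ _
    rw [this, h]
  · intro h; rw [h]

lemma ex_snoc_lt {n : ℕ} (a : S) (b : Fin n → S) {i : ℕ} (h : i < n) :
    ex (Fin.snoc b a : Fin (n + 1) → S) i = ex b i := by
  rw [ex_lt _ (show i < n + 1 by omega), ex_lt _ h]
  simp [Fin.snoc, h]

lemma ex_snoc_last {n : ℕ} (a : S) (b : Fin n → S) :
    ex (Fin.snoc b a : Fin (n + 1) → S) n = a := by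
  rw [ex_lt _ (show n < n + 1 by omega)]
  simp [Fin.snoc]

lemma ex_cons_succ {n : ℕ} (a : S) (b : Fin n → S) {i : ℕ} (h : i < n) :
    ex (Fin.cons a b : Fin (n + 1) → S) (i + 1) = ex b i := by
  rw [ex_lt _ (show i + 1 < n + 1 by omega), ex_lt _ h]
  rfl

lemma ex_cons_zero {n : ℕ} (a : S) (b : Fin n → S) :
    ex (Fin.cons a b : Fin (n + 1) → S) 0 = a := by
  rw [ex_lt _ (show 0 < n + 1 by omega)]
  rfl

lemma pw_snoc {n : ℕ} (hn : 1 ≤ n) (a : S) (b : Fin n → S) :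
    pw Q ψ ρ y (n + 1) (ex (Fin.snoc b a : Fin (n + 1) → S)) =
      pw Q ψ ρ y n (ex b) * (Q (ex b (n - 1)) a * ψ a (y (n + 1))) := by
  obtain ⟨m, rfl⟩ : ∃ m, n = m + 1 := ⟨n - 1, by omega⟩
  unfold pw
  simp only [Nat.add_sub_cancel]
  rw [Finset.prod_range_succ]
  have hpre : ∏ u ∈ range m,
      (Q (ex (Fin.snoc b a : Fin (m + 2) → S) u) (ex (Fin.snoc b a : Fin (m + 2) → S) (u + 1)) *
        ψ (ex (Fin.snoc b a : Fin (m + 2) → S) (u + 1)) (y (u + 2)))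
      = ∏ u ∈ range m, (Q (ex b u) (ex b (u + 1)) * ψ (ex b (u + 1)) (y (u + 2))) := by
    refine Finset.prod_congr rfl fun u hu => ?_
    have hu' := Finset.mem_range.mp hu
    rw [ex_snoc_lt a b (show u < m + 1 by omega), ex_snoc_lt a b (show u + 1 < m + 1 by omega)]
  rw [hpre, ex_snoc_lt a b (show 0 < m + 1 by omega), ex_snoc_lt a b (show m < m + 1 by omega),
    ex_snoc_last a b]
  ring

lemma sw_cons {n : ℕ} (t : ℕ) (a : S) (b : Fin (n + 1) → S) :
    sw Q ψ y t (n + 1) (ex (Fin.cons a b : Fin (n + 2) → S)) =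
      (Q a (ex b 0) * ψ (ex b 0) (y (t + 1))) * sw Q ψ y (t + 1) n (ex b) := by
  unfold sw
  rw [Finset.prod_range_succ']
  have hpre : ∏ u ∈ range n,
      (Q (ex (Fin.cons a b : Fin (n + 2) → S) (u + 1)) (ex (Fin.cons a b : Fin (n + 2) → S) (u + 1 + 1)) *
        ψ (ex (Fin.cons a b : Fin (n + 2) → S) (u + 1 + 1)) (y (t + (u + 1) + 1)))
      = ∏ u ∈ range n, (Q (ex b u) (ex b (u + 1)) * ψ (ex b (u + 1)) (y (t + 1 + u + 1))) := by
    refine Finset.prod_congr rfl fun u hu => ?_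
    have hu' := Finset.mem_range.mp hu
    rw [ex_cons_succ a b (show u < n + 1 by omega), ex_cons_succ a b (show u + 1 < n + 1 by omega),
      show t + (u + 1) + 1 = t + 1 + u + 1 by omega]
  rw [hpre, ex_cons_zero a b, ex_cons_succ a b (show 0 < n + 1 by omega),
    show t + 0 + 1 = t + 1 by omega]
  ring

lemma alpha_eq (T : ℕ) (α : ℕ → S → ℝ)
    (hα1 : ∀ s : S, α 1 s = ρ s * ψ s (y 1))
    (hαrec : ∀ t, 2 ≤ t → t ≤ T → ∀ s : S,
      α t s = ψ s (y t) * ∑ s' : S, α (t - 1) s' * Q s' s) :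
    ∀ t, 1 ≤ t → t ≤ T → ∀ s : S,
      α t s = ∑ z ∈ univ.filter (fun z : Fin t → S => ex z (t - 1) = s),
        pw Q ψ ρ y t (ex z) := by
  intro t
  induction t with
  | zero => omega
  | succ n IH =>
    intro _ hle s
    rcases Nat.eq_zero_or_pos n with hn | hn
    · subst hn
      rw [show (1:ℕ) - 1 = 0 from rfl, filter_one, sum_singleton, hα1]
      simp [pw, ex]
    · have h2 : 2 ≤ n + 1 := by omega
      rw [hαrec (n + 1) h2 hle s]
      simp only [Nat.add_sub_cancel]
      have hIH := IH (by omega) (by omega)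
      rw [Finset.sum_filter]
      rw [← Equiv.sum_comp (Fin.snocEquiv (fun _ : Fin (n + 1) => S))
        (fun z : Fin (n + 1) → S =>
          if ex z n = s then pw Q ψ ρ y (n + 1) (ex z) else 0)]
      rw [Fintype.sum_prod_type]
      have key : ∀ (a : S) (b : Fin n → S),
          (if ex (Fin.snocEquiv (fun _ : Fin (n + 1) => S) (a, b)) n = s
            then pw Q ψ ρ y (n + 1) (ex (Fin.snocEquiv (fun _ : Fin (n + 1) => S) (a, b))) else 0)
          = if a = s then pw Q ψ ρ y n (ex b) * (Q (ex b (n - 1)) a * ψ a (y (n + 1))) else 0 := by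
        intro a b
        have hz : (Fin.snocEquiv (fun _ : Fin (n + 1) => S) (a, b) : Fin (n + 1) → S)
            = Fin.snoc b a := by
          funext i; rfl
        rw [hz, ex_snoc_last a b, pw_snoc Q ψ ρ y hn a b]
      simp only [key]
      rw [Finset.sum_comm]
      simp only [Finset.sum_ite_eq' univ s, mem_univ, if_true]
      rw [← Finset.sum_fiberwise_of_maps_to (g := fun b : Fin n → S => ex b (n - 1))
        (t := univ) (fun b _ => mem_univ _)]
      rw [Finset.mul_sum]
      refine Finset.sum_congr rfl fun s'' _ => ?_
      rw [hIH s'', Finset.sum_mul, Finset.mul_sum]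
      refine Finset.sum_congr rfl fun b hb => ?_
      have hbb := (Finset.mem_filter.mp hb).2
      rw [hbb]
      ring

lemma beta_eq (T : ℕ) (hT : 2 ≤ T) (β : ℕ → S → ℝ)
    (hβT : ∀ s : S, β T s = 1)
    (hβrec : ∀ t, 1 ≤ t → t ≤ T - 1 → ∀ s : S,
      β t s = ∑ s' : S, Q s s' * ψ s' (y (t + 1)) * β (t + 1) s') :
    ∀ d, d ≤ T - 1 → ∀ s : S,
      β (T - d) s = ∑ z ∈ univ.filter (fun z : Fin (d + 1) → S => ex z 0 = s),
        sw Q ψ y (T - d) d (ex z) := by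
  intro d
  induction d with
  | zero =>
    intro _ s
    rw [Nat.sub_zero, hβT, filter_one, sum_singleton]
    simp [sw]
  | succ d IH =>
    intro hd s
    have h1 : 1 ≤ T - (d + 1) := by omega
    have h2 : T - (d + 1) ≤ T - 1 := by omega
    rw [hβrec _ h1 h2 s]
    have hTd : T - (d + 1) + 1 = T - d := by omega
    rw [hTd]
    have hIH := IH (by omega)
    rw [Finset.sum_filter]
    rw [← Equiv.sum_comp (Fin.consEquiv (fun _ : Fin (d + 2) => S))
      (fun z : Fin (d + 2) → S =>
        if ex z 0 = s then sw Q ψ y (T - (d + 1)) (d + 1) (ex z) else 0)]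
    rw [Fintype.sum_prod_type]
    have key : ∀ (a : S) (b : Fin (d + 1) → S),
        (if ex (Fin.consEquiv (fun _ : Fin (d + 2) => S) (a, b)) 0 = s
          then sw Q ψ y (T - (d + 1)) (d + 1) (ex (Fin.consEquiv (fun _ : Fin (d + 2) => S) (a, b))) else 0)
        = if a = s then (Q a (ex b 0) * ψ (ex b 0) (y (T - (d + 1) + 1)))
            * sw Q ψ y (T - (d + 1) + 1) d (ex b) else 0 := by
      intro a b
      have hz : (Fin.consEquiv (fun _ : Fin (d + 2) => S) (a, b) : Fin (d + 2) → S)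
          = Fin.cons a b := by
        funext i; rfl
      rw [hz, ex_cons_zero a b, sw_cons Q ψ y (T - (d + 1)) a b]
    simp only [key]
    rw [Finset.sum_comm]
    simp only [Finset.sum_ite_eq' univ s, mem_univ, if_true]
    rw [← Finset.sum_fiberwise_of_maps_to (g := fun b : Fin (d + 1) → S => ex b 0)
      (t := univ) (fun b _ => mem_univ _)]
    refine Finset.sum_congr rfl fun s' _ => ?_
    rw [hTd, hIH s']
    rw [Finset.mul_sum]
    refine Finset.sum_congr rfl fun b hb => ?_
    have hbb := (Finset.mem_filter.mp hb).2
    rw [hbb]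

variable {t m : ℕ}

/-- glue a prefix path and a suffix path. -/
def glue (p : (Fin t → S) × (Fin m → S)) : Fin (t + m) → S :=
  fun i => if h : (i : ℕ) < t then p.1 ⟨i, h⟩ else p.2 ⟨(i : ℕ) - t, by omega⟩

def splitE (t m : ℕ) : ((Fin t → S) × (Fin m → S)) ≃ (Fin (t + m) → S) where
  toFun := glue
  invFun z := (fun j => z ⟨j, by omega⟩, fun j => z ⟨t + j, by omega⟩)
  left_inv p := by
    refine Prod.ext ?_ ?_ <;> funext j
    · show glue p ⟨(j : ℕ), _⟩ = p.1 j
      have : ((j : ℕ) : ℕ) < t := j.2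
      rw [glue, dif_pos this]
    · show glue p ⟨t + (j : ℕ), _⟩ = p.2 j
      rw [glue, dif_neg (by simp)]
      exact congrArg p.2 (Fin.ext (by simp))
  right_inv z := by
    funext i
    by_cases h : (i : ℕ) < t
    · show glue _ i = z i
      rw [glue, dif_pos h]
    · show glue _ i = z i
      rw [glue, dif_neg h]
      exact congrArg z (Fin.ext (by simp; omega))

lemma ex_glue_lt (p : (Fin t → S) × (Fin m → S)) {i : ℕ} (h : i < t) :
    ex (glue p) i = ex p.1 i := by
  rw [ex_lt _ (show i < t + m by omega), ex_lt _ h]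
  show (if h' : i < t then p.1 ⟨i, h'⟩ else _) = p.1 ⟨i, h⟩
  rw [dif_pos h]

lemma ex_glue_ge (p : (Fin t → S) × (Fin m → S)) {j : ℕ} (hj : j < m) :
    ex (glue p) (t + j) = ex p.2 j := by
  rw [ex_lt _ (show t + j < t + m by omega), ex_lt _ hj]
  show (if h' : t + j < t then p.1 ⟨t + j, h'⟩ else p.2 ⟨t + j - t, _⟩) = p.2 ⟨j, hj⟩
  rw [dif_neg (by omega)]
  exact congrArg p.2 (Fin.ext (by simp))

lemma pw_glue (ht : 1 ≤ t) (hm : 1 ≤ m) (p : (Fin t → S) × (Fin m → S)) :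
    pw Q ψ ρ y (t + m) (ex (glue p)) =
      pw Q ψ ρ y t (ex p.1) * (Q (ex p.1 (t - 1)) (ex p.2 0) * ψ (ex p.2 0) (y (t + 1)))
        * sw Q ψ y (t + 1) (m - 1) (ex p.2) := by
  obtain ⟨k, rfl⟩ : ∃ k, m = k + 1 := ⟨m - 1, by omega⟩
  obtain ⟨r, rfl⟩ : ∃ r, t = r + 1 := ⟨t - 1, by omega⟩
  unfold pw sw
  simp only [Nat.add_sub_cancel]
  rw [show r + 1 + (k + 1) - 1 = (r + 1) + k from by omega]
  rw [Finset.prod_range_add, Finset.prod_range_succ]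
  have h0 : ex (glue p) 0 = ex p.1 0 := ex_glue_lt p (by omega)
  have hpre : ∏ u ∈ range r,
      (Q (ex (glue p) u) (ex (glue p) (u + 1)) * ψ (ex (glue p) (u + 1)) (y (u + 2)))
      = ∏ u ∈ range r, (Q (ex p.1 u) (ex p.1 (u + 1)) * ψ (ex p.1 (u + 1)) (y (u + 2))) := by
    refine Finset.prod_congr rfl fun u hu => ?_
    have hu' := Finset.mem_range.mp hu
    rw [ex_glue_lt p (show u < r + 1 by omega), ex_glue_lt p (show u + 1 < r + 1 by omega)]
  have hmid1 : ex (glue p) r = ex p.1 r := ex_glue_lt p (by omega)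
  have hmid2 : ex (glue p) (r + 1) = ex p.2 0 := by
    have := ex_glue_ge p (show 0 < k + 1 by omega)
    simpa using this
  have hsuf : ∏ i ∈ range k,
      (Q (ex (glue p) (r + 1 + i)) (ex (glue p) (r + 1 + i + 1)) *
        ψ (ex (glue p) (r + 1 + i + 1)) (y (r + 1 + i + 2)))
      = ∏ i ∈ range k, (Q (ex p.2 i) (ex p.2 (i + 1)) * ψ (ex p.2 (i + 1)) (y (r + 1 + 1 + i + 1))) := by
    refine Finset.prod_congr rfl fun i hi => ?_
    have hi' := Finset.mem_range.mp hi
    have e1 : ex (glue p) (r + 1 + i) = ex p.2 i := ex_glue_ge p (show i < k + 1 by omega)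
    have e2 : ex (glue p) (r + 1 + i + 1) = ex p.2 (i + 1) := by
      have := ex_glue_ge p (show i + 1 < k + 1 by omega)
      rwa [show r + 1 + (i + 1) = r + 1 + i + 1 from by omega] at this
    rw [e1, e2, show r + 1 + i + 2 = r + 1 + 1 + i + 1 from by omega]
  rw [h0, hpre, hmid1, hmid2, hsuf]
  ring

lemma combine (T : ℕ) (hT : 2 ≤ T) (tt : ℕ) (ht1 : 1 ≤ tt) (ht2 : tt ≤ T - 1) (s s' : S) :
    ∑ z ∈ univ.filter (fun z : Fin T → S => ex z (tt - 1) = s ∧ ex z tt = s'),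
        pw Q ψ ρ y T (ex z)
      = (∑ a ∈ univ.filter (fun a : Fin tt → S => ex a (tt - 1) = s), pw Q ψ ρ y tt (ex a))
        * (Q s s' * ψ s' (y (tt + 1)))
        * (∑ b ∈ univ.filter (fun b : Fin (T - tt) → S => ex b 0 = s'),
            sw Q ψ y (tt + 1) (T - tt - 1) (ex b)) := by
  obtain ⟨m, rfl⟩ : ∃ m, T = tt + m := ⟨T - tt, by omega⟩
  have hm : 1 ≤ m := by omega
  rw [show tt + m - tt = m from by omega]
  simp only [Finset.sum_filter]
  rw [← Equiv.sum_comp (splitE (S := S) tt m)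
    (fun z : Fin (tt + m) → S =>
      if ex z (tt - 1) = s ∧ ex z tt = s' then pw Q ψ ρ y (tt + m) (ex z) else 0)]
  rw [Fintype.sum_prod_type]
  have key : ∀ (a : Fin tt → S) (b : Fin m → S),
      (if ex (splitE (S := S) tt m (a, b)) (tt - 1) = s ∧ ex (splitE (S := S) tt m (a, b)) tt = s'
        then pw Q ψ ρ y (tt + m) (ex (splitE (S := S) tt m (a, b))) else 0)
      = (if ex a (tt - 1) = s then pw Q ψ ρ y tt (ex a) else 0)
          * (Q s s' * ψ s' (y (tt + 1)))
          * (if ex b 0 = s' then sw Q ψ y (tt + 1) (m - 1) (ex b) else 0) := by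
    intro a b
    have hsp : (splitE (S := S) tt m (a, b) : Fin (tt + m) → S) = glue (a, b) := rfl
    have e1 : ex (splitE (S := S) tt m (a, b)) (tt - 1) = ex a (tt - 1) := by
      rw [hsp]; exact ex_glue_lt (a, b) (by omega)
    have e2 : ex (splitE (S := S) tt m (a, b)) tt = ex b 0 := by
      rw [hsp]
      have := ex_glue_ge (t := tt) (p := (a, b)) (show 0 < m by omega)
      simpa using this
    rw [e1, e2]
    by_cases h1 : ex a (tt - 1) = s
    · by_cases h2 : ex b 0 = s'
      · rw [if_pos ⟨h1, h2⟩, if_pos h1, if_pos h2, hsp,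
          pw_glue Q ψ ρ y ht1 hm (a, b), h1, h2]
      · rw [if_neg (by tauto), if_neg h2]
        ring
    · rw [if_neg (by tauto), if_neg h1]
      ring
  simp only [key]
  simp only [← Finset.mul_sum, ← Finset.sum_mul]

end BW15


/-- Baum-Welch joint-transition identity: for `1 ≤ t ≤ T-1` and states `s, s'`, the product
`α_s(t) Q(s,s') ψ(s',y_{t+1}) β_{s'}(t+1)` equals the sum of the path weights
`w(z) = ρ(z₁) ψ(z₁,y₁) ∏_{u=2}^{T} Q(z_{u-1},z_u) ψ(z_u,y_u)` over all hidden paths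
`z : {1,…,T} → S` with `z(t) = s` and `z(t+1) = s'` (encoded as `z : Fin T → S`, `z k`
being the state at time `k+1`). -/
theorem stmt_15 {S O : Type*} [Fintype S] [DecidableEq S]
    (Q : S → S → ℝ) (ψ : S → O → ℝ) (ρ : S → ℝ) (T : ℕ) (hT : 2 ≤ T)
    (y : ℕ → O) (α β : ℕ → S → ℝ)
    (hα1 : ∀ s : S, α 1 s = ρ s * ψ s (y 1))
    (hαrec : ∀ t, ∀ _ht1 : 2 ≤ t, ∀ _ht2 : t ≤ T, ∀ s : S,
      α t s = ψ s (y t) * ∑ s' : S, α (t - 1) s' * Q s' s)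
    (hβT : ∀ s : S, β T s = 1)
    (hβrec : ∀ t, ∀ _ht1 : 1 ≤ t, ∀ _ht2 : t ≤ T - 1, ∀ s : S,
      β t s = ∑ s' : S, Q s s' * ψ s' (y (t + 1)) * β (t + 1) s') :
    ∀ t, ∀ _ht1 : 1 ≤ t, ∀ _ht2 : t ≤ T - 1, ∀ s s' : S,
      α t s * Q s s' * ψ s' (y (t + 1)) * β (t + 1) s'
        = ∑ z ∈ Finset.univ.filter
              (fun z : Fin T → S => z ⟨t - 1, by omega⟩ = s ∧ z ⟨t, by omega⟩ = s'),
            ρ (z ⟨0, by omega⟩) * ψ (z ⟨0, by omega⟩) (y 1) *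
              ∏ u ∈ (Finset.range (T - 1)).attach,
                Q (z ⟨u.1, by have := Finset.mem_range.mp u.2; omega⟩)
                    (z ⟨u.1 + 1, by have := Finset.mem_range.mp u.2; omega⟩) *
                  ψ (z ⟨u.1 + 1, by have := Finset.mem_range.mp u.2; omega⟩) (y (u.1 + 2)) := by
  intro t ht1 ht2 s s'
  rcases isEmpty_or_nonempty S with hS | hS
  · exact (hS.false s).elim
  · have hrhs : (∑ z ∈ Finset.univ.filter
              (fun z : Fin T → S => z ⟨t - 1, by omega⟩ = s ∧ z ⟨t, by omega⟩ = s'),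
            ρ (z ⟨0, by omega⟩) * ψ (z ⟨0, by omega⟩) (y 1) *
              ∏ u ∈ (Finset.range (T - 1)).attach,
                Q (z ⟨u.1, by have := Finset.mem_range.mp u.2; omega⟩)
                    (z ⟨u.1 + 1, by have := Finset.mem_range.mp u.2; omega⟩) *
                  ψ (z ⟨u.1 + 1, by have := Finset.mem_range.mp u.2; omega⟩) (y (u.1 + 2)))
        = ∑ z ∈ Finset.univ.filter
            (fun z : Fin T → S => BW15.ex z (t - 1) = s ∧ BW15.ex z t = s'),
            BW15.pw Q ψ ρ y T (BW15.ex z) := by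
      refine Finset.sum_congr ?_ ?_
      · refine Finset.filter_congr fun z _ => ?_
        rw [BW15.ex_lt z (show t - 1 < T by omega), BW15.ex_lt z (show t < T by omega)]
      · intro z hz
        rw [BW15.pw]
        rw [BW15.ex_lt z (show 0 < T by omega)]
        congr 1
        rw [← Finset.prod_attach (Finset.range (T - 1))
          (fun u => Q (BW15.ex z u) (BW15.ex z (u + 1)) * ψ (BW15.ex z (u + 1)) (y (u + 2)))]
        refine Finset.prod_congr rfl fun u _ => ?_
        have hu := Finset.mem_range.mp u.2
        rw [BW15.ex_lt z (show u.1 < T by omega), BW15.ex_lt z (show u.1 + 1 < T by omega)]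
    rw [hrhs, BW15.combine Q ψ ρ y T hT t ht1 ht2 s s']
    rw [← BW15.alpha_eq Q ψ ρ y T α hα1 (fun u h1 h2 => hαrec u h1 h2) t ht1 (by omega) s]
    have hb := BW15.beta_eq Q ψ y T hT β hβT (fun u h1 h2 => hβrec u h1 h2) (T - 1 - t)
      (by omega) s'
    rw [show T - (T - 1 - t) = t + 1 from by omega] at hb
    rw [show T - 1 - t = T - t - 1 from by omega] at hb
    rw [show T - t - 1 + 1 = T - t from by omega] at hb
    rw [← hb]
    ring
end
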